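/- arXiv:1803.09485 — 3 statements merged into one kernel-verified Lean document; each statement's English description precedes it below -/
import Mathlib

section
/- If f : ω → ω is total, then there is a set B ⊆ ω with B ≡_e graph(f) such that C_B ≡_s E_{graph(f)}. -/
/-!  Common definitions: mass problems in Baire space, Medvedev reducibility,
enumeration reducibility, trees, and related notions. -/

/-- A Turing functional, given by a monotone partial recursive map taking a
finite initial segment of the oracle and an input to an output value. -/
structure TuringFunctional where
  app : List ℕ × ℕ →. ℕ
  partrec : Partrec app
  mono : ∀ {σ τ : List ℕ} {n y : ℕ}, σ <+: τ → y ∈ app (σ, n) → y ∈ app (τ, n)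

/-- `Φ.Total g f` means that `Φ(g)` is total and equals `f`. -/
def TuringFunctional.Total (Φ : TuringFunctional) (g f : ℕ → ℕ) : Prop :=
  ∀ n, ∃ k, f n ∈ Φ.app ((List.range k).map g, n)

/-- Medvedev reducibility `A ≤ₛ B` between mass problems. -/
def MedvedevLE (A B : Set (ℕ → ℕ)) : Prop :=
  ∃ Φ : TuringFunctional, ∀ g ∈ B, ∃ f, Φ.Total g f ∧ f ∈ A

/-- Medvedev equivalence. -/
def MedvedevEquiv (A B : Set (ℕ → ℕ)) : Prop := MedvedevLE A B ∧ MedvedevLE B A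

/-- The problem of enumerability of `A`: all functions with range `A`. -/
def EProb (A : Set ℕ) : Set (ℕ → ℕ) := {f | Set.range f = A}

/-- The graph of `f`, coded as a set of naturals via the pairing function. -/
def graphSet (f : ℕ → ℕ) : Set ℕ := Set.range fun n => Nat.pair n (f n)

/-- The `e`-th enumeration operator applied to a set `B`:
`x` is enumerated iff for some (code `u` of a) finite list contained in `B`,
the `e`-th partial recursive function halts on `⟨x, u⟩`. -/
def enumOpApply (e : ℕ) (B : Set ℕ) : Set ℕ :=
  {x | ∃ u : ℕ, ((Denumerable.ofNat Nat.Partrec.Code e).eval (Nat.pair x u)).Dom ∧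
        ∀ y ∈ Denumerable.ofNat (List ℕ) u, y ∈ B}

/-- Enumeration reducibility between subsets of `ℕ`. -/
def EnumLE (A B : Set ℕ) : Prop := ∃ e : ℕ, enumOpApply e B = A

/-- Enumeration equivalence. -/
def EnumEquiv (A B : Set ℕ) : Prop := EnumLE A B ∧ EnumLE B A

/-- `A` is recursively enumerable: it is the domain of a partial recursive function. -/
def REset (A : Set ℕ) : Prop := ∃ c : Nat.Partrec.Code, A = {x | (c.eval x).Dom}

/-- `A` is quasiminimal: not r.e., and every total function whose graph
enumeration-reduces to `A` is recursive. -/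
def Quasiminimal (A : Set ℕ) : Prop :=
  ¬ REset A ∧ ∀ f : ℕ → ℕ, EnumLE (graphSet f) A → Computable f

/-- `A` (as a set) has cototal enumeration degree. -/
def CototalDeg (A : Set ℕ) : Prop := ∃ B : Set ℕ, EnumEquiv B A ∧ EnumLE B Bᶜ

/-- The set `K_A = {⟨e,x⟩ : x ∈ Ψ_e(A)}`. -/
def Kset (A : Set ℕ) : Set ℕ := {p | p.unpair.2 ∈ enumOpApply p.unpair.1 A}

/-- The skip of `A`. -/
def skipSet (A : Set ℕ) : Set ℕ := (Kset A)ᶜ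

/-- The recursive join of two subsets of `ℕ`. -/
def joinSet (A B : Set ℕ) : Set ℕ :=
  {n | (n % 2 = 0 ∧ n / 2 ∈ A) ∨ (n % 2 = 1 ∧ n / 2 ∈ B)}

/-- `A` is recursively enumerable in (the characteristic function of) `X`,
i.e. `A ≤ₑ X ⊕ Xᶜ`. -/
def REin (A X : Set ℕ) : Prop := EnumLE A (joinSet X Xᶜ)

/-- Trees: subsets of `ω^{<ω}` closed under initial segments. -/
def IsTree (T : Set (List ℕ)) : Prop := ∀ ⦃σ τ : List ℕ⦄, σ <+: τ → τ ∈ T → σ ∈ T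

/-- A leaf of `T`: a node with no proper extension in `T`. -/
def IsLeaf (T : Set (List ℕ)) (σ : List ℕ) : Prop :=
  σ ∈ T ∧ ∀ τ ∈ T, σ <+: τ → τ = σ

/-- `T` has no leaves. -/
def NoLeaves (T : Set (List ℕ)) : Prop := ∀ σ ∈ T, ¬ IsLeaf T σ

/-- `T` is finitely branching. -/
def FinBranching (T : Set (List ℕ)) : Prop := ∀ σ ∈ T, {n : ℕ | σ ++ [n] ∈ T}.Finite

/-- `[T]`: the set of infinite paths through `T`. -/
def Paths (T : Set (List ℕ)) : Set (ℕ → ℕ) := {f | ∀ n, (List.range n).map f ∈ T}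

/-- A tree coded as a subset of `ℕ`. -/
def codeTree (T : Set (List ℕ)) : Set ℕ := Encodable.encode '' T

/-- `T` is `h`-bounded. -/
def BoundedTree (h : ℕ → ℕ) (T : Set (List ℕ)) : Prop :=
  ∀ σ ∈ T, ∀ i : ℕ, ∀ hi : i < σ.length, σ.get ⟨i, hi⟩ < h i

/-- A uniformly e-pointed tree with respect to functions. -/
def UEPfun (T : Set (List ℕ)) : Prop :=
  IsTree T ∧ FinBranching T ∧ NoLeaves T ∧
    ∃ e : ℕ, ∀ g ∈ Paths T, enumOpApply e (graphSet g) = codeTree T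

/-- A uniformly e-pointed tree with respect to sets (a subtree of `2^{<ω}`). -/
def UEPset (T : Set (List ℕ)) : Prop :=
  IsTree T ∧ (∀ σ ∈ T, ∀ i ∈ σ, i ≤ 1) ∧ NoLeaves T ∧
    ∃ e : ℕ, ∀ g ∈ Paths T, enumOpApply e {n | g n = 1} = codeTree T

/-- Prepend `i` to a function. -/
def consFun (i : ℕ) (f : ℕ → ℕ) : ℕ → ℕ := fun n => Nat.casesOn n i fun m => f m

/-- The mass problem `0⌢A ∪ 1⌢B`, representing the meet of the degrees of `A` and `B`. -/
def meetProb (A B : Set (ℕ → ℕ)) : Set (ℕ → ℕ) := consFun 0 '' A ∪ consFun 1 '' B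

/-- A mass problem has meet-irreducible Medvedev degree: its degree is not the
meet of two strictly larger degrees. -/
def MeetIrred (X : Set (ℕ → ℕ)) : Prop :=
  ¬ ∃ B C : Set (ℕ → ℕ), MedvedevEquiv (meetProb B C) X ∧
      (MedvedevLE X B ∧ ¬ MedvedevLE B X) ∧ (MedvedevLE X C ∧ ¬ MedvedevLE C X)

/-- `σ` is an initial segment of `f`. -/
def strPrefix (σ : List ℕ) (f : ℕ → ℕ) : Prop := (List.range σ.length).map f = σ

/-- A uniform mass problem. -/
def UniformProb (A : Set (ℕ → ℕ)) : Prop :=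
  ∀ σ : List ℕ, (∃ f ∈ A, strPrefix σ f) → MedvedevLE {f | f ∈ A ∧ strPrefix σ f} A

/-- The `{0,1}`-valued diagonally nonrecursive functions. -/
def DNR2 : Set (ℕ → ℕ) :=
  {f | (∀ n, f n ≤ 1) ∧
    ∀ e y : ℕ, y ∈ (Denumerable.ofNat Nat.Partrec.Code e).eval e → f e ≠ y}

/-- `C_A`: injective enumerations of subsets of `A`. -/
def CProb (A : Set ℕ) : Set (ℕ → ℕ) :=
  {f | Function.Injective f ∧ Set.range f ⊆ A}

namespace Stmt7

theorem getElem?_findIdx (p : ℕ → Bool) : ∀ l : List ℕ, l[l.findIdx p]? = l.find? p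
  | [] => rfl
  | a :: l => by
    by_cases h : p a
    · simp [List.findIdx_cons, h]
    · simp [List.findIdx_cons, h, getElem?_findIdx p l]

theorem primrec_find? {α} [Primcodable α] {l : α → List ℕ} {p : α → ℕ → Bool}
    (hl : Primrec l) (hp : Primrec₂ p) : Primrec fun a => (l a).find? (p a) :=
  (Primrec.list_getElem?.comp hl (Primrec.list_findIdx hl hp)).of_eq fun a =>
    getElem?_findIdx _ _

theorem find?_mono {p : ℕ → Bool} {σ τ : List ℕ} (h : σ <+: τ) {y : ℕ}
    (hy : σ.find? p = some y) : τ.find? p = some y := by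
  obtain ⟨r, rfl⟩ := h
  simp [List.find?_append, hy]

def seg (f : ℕ → ℕ) (n : ℕ) : ℕ := Encodable.encode ((List.range n).map f)

theorem seg_injective (f : ℕ → ℕ) : Function.Injective (seg f) := by
  intro m n h
  have h2 := congrArg List.length (Encodable.encode_injective h)
  simpa using h2

def dig (σ : List ℕ) (i : ℕ) : Option ℕ := σ.find? fun y => y.unpair.1 == i

def vals (σ : List ℕ) (n : ℕ) : List ℕ :=
  (List.range n).map fun i => (dig σ i).getD (Nat.pair (i + 1) 0)

def F1 : List ℕ × ℕ → Option ℕ := fun p =>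
  if (vals p.1 p.2).map (fun y => y.unpair.1) = List.range p.2 then
    some (Encodable.encode ((vals p.1 p.2).map fun y => y.unpair.2))
  else none

theorem primrec_dig : Primrec₂ dig :=
  primrec_find? Primrec.fst
    ((Primrec.beq.comp (Primrec.fst.comp (Primrec.unpair.comp Primrec.snd))
      (Primrec.snd.comp Primrec.fst)).to₂)

theorem primrec_vals : Primrec fun p : List ℕ × ℕ => vals p.1 p.2 :=
  Primrec.list_map (Primrec.list_range.comp Primrec.snd)
    ((Primrec.option_getD.comp
        (primrec_dig.comp (Primrec.fst.comp Primrec.fst) Primrec.snd)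
        (Primrec₂.natPair.comp (Primrec.succ.comp Primrec.snd)
          (Primrec.const 0))).to₂)

theorem computable_F1 : Computable F1 := by
  have hu1 : Primrec fun p : List ℕ × ℕ => (vals p.1 p.2).map fun y => y.unpair.1 :=
    Primrec.list_map primrec_vals
      ((Primrec.fst.comp (Primrec.unpair.comp Primrec.snd)).to₂)
  have hu2 : Primrec fun p : List ℕ × ℕ => (vals p.1 p.2).map fun y => y.unpair.2 :=
    Primrec.list_map primrec_vals
      ((Primrec.snd.comp (Primrec.unpair.comp Primrec.snd)).to₂)
  exact (Primrec.ite (Primrec.eq.comp hu1 (Primrec.list_range.comp Primrec.snd))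
    (Primrec.option_some.comp (Primrec.encode.comp hu2))
    (Primrec.const none)).to_comp

def dlen (y : ℕ) : ℕ := ((Encodable.decode y : Option (List ℕ)).getD []).length

theorem primrec_dlen : Primrec dlen :=
  Primrec.list_length.comp (Primrec.option_getD.comp Primrec.decode (Primrec.const []))

def F2 : List ℕ × ℕ → Option ℕ := fun p =>
  (p.1.find? fun y => decide (p.2 < dlen y)).map fun y =>
    Nat.pair p.2 (((Encodable.decode y : Option (List ℕ)).getD []).getD p.2 0)

theorem computable_F2 : Computable F2 := by
  have hfind : Primrec fun p : List ℕ × ℕ => p.1.find? fun y => decide (p.2 < dlen y) :=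
    primrec_find? Primrec.fst
      ((Primrec.nat_lt.comp (Primrec.snd.comp Primrec.fst)
        (primrec_dlen.comp Primrec.snd)).decide.to₂)
  exact (Primrec.option_map hfind
    ((Primrec₂.natPair.comp (Primrec.snd.comp Primrec.fst)
      (Primrec.list_getD 0
        |>.comp (Primrec.option_getD.comp (Primrec.decode.comp Primrec.snd)
            (Primrec.const []))
          (Primrec.snd.comp Primrec.fst))).to₂)).to_comp

-- correctness of F1
theorem dig_unpair {σ : List ℕ} {i v : ℕ} (h : dig σ i = some v) :
    v.unpair.1 = i ∧ v ∈ σ := by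
  refine ⟨by simpa using List.find?_some h, List.mem_of_find?_eq_some h⟩

theorem F1_cond_dig {σ : List ℕ} {n : ℕ}
    (h : (vals σ n).map (fun y => y.unpair.1) = List.range n) :
    ∀ i < n, ∃ v, dig σ i = some v := by
  intro i hi
  have h2 := congrArg (fun L => L[i]?) h
  simp only [vals, List.getElem?_map, List.getElem?_range hi, Option.map_some] at h2
  cases hd : dig σ i with
  | some v => exact ⟨v, rfl⟩
  | none => rw [hd] at h2; simp at h2

theorem F1_mono {σ τ : List ℕ} {n y : ℕ} (h : σ <+: τ) (hy : F1 (σ, n) = some y) :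
    F1 (τ, n) = some y := by
  unfold F1 at hy ⊢
  split at hy
  case isFalse => exact absurd hy (by simp)
  case isTrue hc =>
    have hdig := F1_cond_dig hc
    have hvals : vals τ n = vals σ n := by
      unfold vals
      refine List.map_congr_left fun i hi => ?_
      obtain ⟨v, hv⟩ := hdig i (List.mem_range.1 hi)
      have hv' : dig σ i = some v := hv
      have hv2 : dig τ i = some v := find?_mono h hv'
      rw [hv', hv2]
    simp only [hvals]
    rw [if_pos hc]
    exact hy

theorem dig_graph {f : ℕ → ℕ} {σ : List ℕ} (hσ : ∀ y ∈ σ, y ∈ graphSet f)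
    {i : ℕ} (hi : Nat.pair i (f i) ∈ σ) : dig σ i = some (Nat.pair i (f i)) := by
  have hsome : (σ.find? fun y => y.unpair.1 == i).isSome := by
    rw [List.find?_isSome]
    exact ⟨Nat.pair i (f i), hi, by simp⟩
  obtain ⟨v, hv⟩ := Option.isSome_iff_exists.1 hsome
  obtain ⟨h1, h2⟩ := dig_unpair hv
  obtain ⟨m, hm⟩ := hσ v h2
  rw [dig, hv]
  rw [← hm] at h1 ⊢
  simp only [Nat.unpair_pair] at h1
  rw [h1]

theorem F1_spec {f : ℕ → ℕ} {σ : List ℕ} {n : ℕ} (hσ : ∀ y ∈ σ, y ∈ graphSet f)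
    (hall : ∀ i < n, Nat.pair i (f i) ∈ σ) : F1 (σ, n) = some (seg f n) := by
  have hvals : vals σ n = (List.range n).map fun i => Nat.pair i (f i) := by
    unfold vals
    refine List.map_congr_left fun i hi => ?_
    rw [dig_graph hσ (hall i (List.mem_range.1 hi))]
    rfl
  have h1 : List.map ((fun y => (Nat.unpair y).1) ∘ fun i => Nat.pair i (f i))
      (List.range n) = List.range n := by
    refine (List.map_congr_left fun i _ => ?_).trans (List.map_id _)
    simp [Function.comp]
  have h2 : List.map ((fun y => (Nat.unpair y).2) ∘ fun i => Nat.pair i (f i))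
      (List.range n) = List.map f (List.range n) :=
    List.map_congr_left fun i _ => by simp [Function.comp]
  unfold F1
  simp only [hvals, List.map_map]
  rw [if_pos h1, h2]
  rfl

-- correctness of F2
theorem F2_mono {σ τ : List ℕ} {m y : ℕ} (h : σ <+: τ) (hy : F2 (σ, m) = some y) :
    F2 (τ, m) = some y := by
  unfold F2 at hy ⊢
  cases hf : σ.find? fun y => decide (m < dlen y) with
  | none => rw [hf] at hy; exact absurd hy (by simp)
  | some v => rw [hf] at hy; rw [find?_mono h hf]; exact hy

theorem F2_spec {f : ℕ → ℕ} {σ : List ℕ} {m : ℕ}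
    (hσ : ∀ y ∈ σ, ∃ n, seg f n = y) (hex : ∃ y ∈ σ, m < dlen y) :
    F2 (σ, m) = some (Nat.pair m (f m)) := by
  have hsome : (σ.find? fun y => decide (m < dlen y)).isSome := by
    rw [List.find?_isSome]
    obtain ⟨y, hy, hlt⟩ := hex
    exact ⟨y, hy, by simpa using hlt⟩
  obtain ⟨v, hv⟩ := Option.isSome_iff_exists.1 hsome
  have hlt : m < dlen v := by simpa using List.find?_some hv
  obtain ⟨n, hn⟩ := hσ v (List.mem_of_find?_eq_some hv)
  have hdec : (Encodable.decode v : Option (List ℕ)) = some ((List.range n).map f) := by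
    rw [← hn]; exact Encodable.encodek _
  have hofn : Denumerable.ofNat (List ℕ) v = (List.range n).map f := by
    have h' := hdec
    rw [Denumerable.decode_eq_ofNat] at h'
    exact Option.some_injective _ h'
  have hlen : m < n := by simpa [dlen, Denumerable.decode_eq_ofNat, hofn] using hlt
  unfold F2
  rw [hv]
  simp [Denumerable.decode_eq_ofNat, hofn, List.getD_eq_getElem?_getD,
    List.getElem?_range hlen]

def Phi1 : TuringFunctional where
  app := fun p => (F1 p : Part ℕ)
  partrec := computable_F1.ofOption
  mono := fun {σ τ n y} h hy => by
    rw [Part.mem_coe, Option.mem_def] at hy ⊢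
    exact F1_mono h hy

def Phi2 : TuringFunctional where
  app := fun p => (F2 p : Part ℕ)
  partrec := computable_F2.ofOption
  mono := fun {σ τ n y} h hy => by
    rw [Part.mem_coe, Option.mem_def] at hy ⊢
    exact F2_mono h hy

theorem med1 (f : ℕ → ℕ) :
    MedvedevLE (CProb (Set.range (seg f))) (EProb (graphSet f)) := by
  refine ⟨Phi1, fun g hg => ⟨seg f, fun n => ?_, seg_injective f, subset_rfl⟩⟩
  have hg' : Set.range g = graphSet f := hg
  have hex : ∀ i, ∃ k, g k = Nat.pair i (f i) := fun i => by
    have : Nat.pair i (f i) ∈ Set.range g := by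
      rw [hg']; exact ⟨i, rfl⟩
    exact this
  choose K hK using hex
  refine ⟨(Finset.range n).sup K + 1, Part.mem_coe.2 (Option.mem_def.2 ?_)⟩
  apply F1_spec
  · intro y hy
    obtain ⟨j, _, rfl⟩ := List.mem_map.1 hy
    rw [← hg']
    exact ⟨j, rfl⟩
  · intro i hi
    have hK' : K i < (Finset.range n).sup K + 1 :=
      Nat.lt_succ_of_le (Finset.le_sup (Finset.mem_range.2 hi))
    exact List.mem_map.2 ⟨K i, List.mem_range.2 hK', hK i⟩

theorem dlen_seg (f : ℕ → ℕ) (n : ℕ) : dlen (seg f n) = n := by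
  rw [dlen, seg, Encodable.encodek]
  simp

theorem med2 (f : ℕ → ℕ) :
    MedvedevLE (EProb (graphSet f)) (CProb (Set.range (seg f))) := by
  refine ⟨Phi2, fun g hg => ⟨fun m => Nat.pair m (f m), fun m => ?_, rfl⟩⟩
  obtain ⟨ginj, gsub⟩ := hg
  have hidx : ∀ k, ∃ n, seg f n = g k := fun k => gsub ⟨k, rfl⟩
  choose idx hidx using hidx
  have hinj : Function.Injective idx := fun a b hab => by
    apply ginj
    rw [← hidx a, ← hidx b, hab]
  obtain ⟨_, ⟨k, rfl⟩, hk⟩ := (Set.infinite_range_of_injective hinj).exists_gt m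
  refine ⟨k + 1, Part.mem_coe.2 (Option.mem_def.2 ?_)⟩
  apply F2_spec
  · intro y hy
    obtain ⟨j, _, rfl⟩ := List.mem_map.1 hy
    exact ⟨idx j, hidx j⟩
  · refine ⟨g k, List.mem_map.2 ⟨k, List.mem_range.2 (Nat.lt_succ_self k), rfl⟩, ?_⟩
    rw [← hidx k, dlen_seg]
    exact hk

theorem enumOp_of_bool {b : ℕ → Bool} (hb : Computable b) :
    ∃ e : ℕ, ∀ S : Set ℕ, enumOpApply e S =
      {x | ∃ u, b (Nat.pair x u) = true ∧
        ∀ y ∈ Denumerable.ofNat (List ℕ) u, y ∈ S} := by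
  have hφ : Partrec fun n => bif b n then Part.some 0 else Part.none :=
    Partrec.cond hb (Partrec.const' (Part.some 0)) Partrec.none
  obtain ⟨c, hc⟩ := Nat.Partrec.Code.exists_code.1 (Partrec.nat_iff.1 hφ)
  refine ⟨Encodable.encode c, fun S => ?_⟩
  have hdom : ∀ k : ℕ, (bif b k then Part.some 0 else Part.none).Dom ↔ b k = true := by
    intro k
    cases h : b k <;> simp [h, Part.some_dom]
  unfold enumOpApply
  ext x
  simp only [Set.mem_setOf_eq, Denumerable.ofNat_encode, hc, hdom]

def b1 : ℕ → Bool := fun p =>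
  decide (p.unpair.1 =
      Encodable.encode ((Denumerable.ofNat (List ℕ) p.unpair.2).map fun z => z.unpair.2) ∧
    (Denumerable.ofNat (List ℕ) p.unpair.2).map (fun z => z.unpair.1) =
      List.range (Denumerable.ofNat (List ℕ) p.unpair.2).length)

theorem computable_b1 : Computable b1 := by
  have hD : Primrec fun p : ℕ => Denumerable.ofNat (List ℕ) p.unpair.2 :=
    (Primrec.ofNat (List ℕ)).comp (Primrec.snd.comp Primrec.unpair)
  have c1 : PrimrecPred fun p : ℕ => p.unpair.1 =
      Encodable.encode ((Denumerable.ofNat (List ℕ) p.unpair.2).map fun z => z.unpair.2) :=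
    Primrec.eq.comp (Primrec.fst.comp Primrec.unpair)
      (Primrec.encode.comp (Primrec.list_map hD
        ((Primrec.snd.comp (Primrec.unpair.comp Primrec.snd)).to₂)))
  have c2 : PrimrecPred fun p : ℕ =>
      (Denumerable.ofNat (List ℕ) p.unpair.2).map (fun z => z.unpair.1) =
        List.range (Denumerable.ofNat (List ℕ) p.unpair.2).length :=
    Primrec.eq.comp (Primrec.list_map hD
        ((Primrec.fst.comp (Primrec.unpair.comp Primrec.snd)).to₂))
      (Primrec.list_range.comp (Primrec.list_length.comp hD))
  exact (c1.and c2).decide.to_comp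

def b2 : ℕ → Bool := fun p =>
  decide (p.unpair.1.unpair.1 <
      (Denumerable.ofNat (List ℕ)
        ((Denumerable.ofNat (List ℕ) p.unpair.2).getD 0 0)).length ∧
    p.unpair.1.unpair.2 =
      (Denumerable.ofNat (List ℕ)
        ((Denumerable.ofNat (List ℕ) p.unpair.2).getD 0 0)).getD p.unpair.1.unpair.1 0)

theorem computable_b2 : Computable b2 := by
  have hL : Primrec fun p : ℕ => Denumerable.ofNat (List ℕ)
      ((Denumerable.ofNat (List ℕ) p.unpair.2).getD 0 0) :=
    (Primrec.ofNat (List ℕ)).comp ((Primrec.list_getD 0).comp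
      ((Primrec.ofNat (List ℕ)).comp (Primrec.snd.comp Primrec.unpair)) (Primrec.const 0))
  have hx1 : Primrec fun p : ℕ => p.unpair.1.unpair.1 :=
    Primrec.fst.comp (Primrec.unpair.comp (Primrec.fst.comp Primrec.unpair))
  have hx2 : Primrec fun p : ℕ => p.unpair.1.unpair.2 :=
    Primrec.snd.comp (Primrec.unpair.comp (Primrec.fst.comp Primrec.unpair))
  have c1 : PrimrecPred fun p : ℕ => p.unpair.1.unpair.1 <
      (Denumerable.ofNat (List ℕ)
        ((Denumerable.ofNat (List ℕ) p.unpair.2).getD 0 0)).length :=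
    Primrec.nat_lt.comp hx1 (Primrec.list_length.comp hL)
  have c2 : PrimrecPred fun p : ℕ => p.unpair.1.unpair.2 =
      (Denumerable.ofNat (List ℕ)
        ((Denumerable.ofNat (List ℕ) p.unpair.2).getD 0 0)).getD p.unpair.1.unpair.1 0 :=
    Primrec.eq.comp hx2 ((Primrec.list_getD 0).comp hL hx1)
  exact (c1.and c2).decide.to_comp

theorem enum1 (f : ℕ → ℕ) : EnumLE (Set.range (seg f)) (graphSet f) := by
  obtain ⟨e, he⟩ := enumOp_of_bool computable_b1
  refine ⟨e, ?_⟩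
  rw [he]
  ext x
  simp only [Set.mem_setOf_eq, b1, decide_eq_true_eq, Nat.unpair_pair]
  constructor
  · rintro ⟨u, ⟨hx, hmap⟩, hsub⟩
    set D := Denumerable.ofNat (List ℕ) u with hD
    refine ⟨D.length, ?_⟩
    have key : D.map (fun z => z.unpair.2) = (List.range D.length).map f := by
      refine List.ext_getElem (by simp) fun i h1 h2 => ?_
      have hiD : i < D.length := by simpa using h1
      simp only [List.getElem_map, List.getElem_range]
      have hmem : D[i] ∈ D := List.getElem_mem _
      obtain ⟨m, hm⟩ := hsub _ hmem
      have hu1 : D[i].unpair.1 = i := by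
        have h3 := congrArg (fun L => L[i]?) hmap
        simp only [List.getElem?_map, List.getElem?_range hiD,
          List.getElem?_eq_getElem hiD, Option.map_some] at h3
        simpa using h3
      rw [← hm] at hu1 ⊢
      simp only [Nat.unpair_pair] at hu1 ⊢
      rw [hu1]
    rw [seg, ← key, ← hx]
  · rintro ⟨n, rfl⟩
    refine ⟨Encodable.encode ((List.range n).map fun i => Nat.pair i (f i)), ?_⟩
    rw [Denumerable.ofNat_encode]
    refine ⟨⟨?_, ?_⟩, ?_⟩
    · rw [seg, List.map_map]
      congr 1
      exact (List.map_congr_left fun i _ => by simp [Function.comp]).symm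
    · rw [List.map_map, List.length_map, List.length_range]
      refine (List.map_congr_left fun i _ => ?_).trans (List.map_id _)
      simp [Function.comp]
    · intro y hy
      obtain ⟨i, _, rfl⟩ := List.mem_map.1 hy
      exact ⟨i, rfl⟩

theorem enum2 (f : ℕ → ℕ) : EnumLE (graphSet f) (Set.range (seg f)) := by
  obtain ⟨e, he⟩ := enumOp_of_bool computable_b2
  refine ⟨e, ?_⟩
  rw [he]
  ext x
  simp only [Set.mem_setOf_eq, b2, decide_eq_true_eq, Nat.unpair_pair]
  constructor
  · rintro ⟨u, ⟨hlt, hval⟩, hsub⟩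
    cases hD : Denumerable.ofNat (List ℕ) u with
    | nil =>
      exfalso
      rw [hD] at hlt
      have h0 : Denumerable.ofNat (List ℕ) (([] : List ℕ).getD 0 0) = [] := by
        have : (([] : List ℕ).getD 0 0) = Encodable.encode ([] : List ℕ) := by
          simp [Encodable.encode_list_nil]
        rw [this, Denumerable.ofNat_encode]
      rw [h0] at hlt
      simp at hlt
    | cons hd tl =>
      rw [hD] at hlt hval
      obtain ⟨n, hn⟩ := hsub hd (by rw [hD]; exact List.mem_cons_self)
      have hhd : (hd :: tl).getD 0 0 = hd := rfl
      rw [hhd, ← hn, seg, Denumerable.ofNat_encode] at hlt hval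
      rw [List.length_map, List.length_range] at hlt
      have hx : x = Nat.pair x.unpair.1 (f x.unpair.1) := by
        conv_lhs => rw [← Nat.pair_unpair x]
        congr 1
        rw [hval, List.getD_eq_getElem?_getD]
        simp [List.getElem?_map, List.getElem?_range hlt]
      exact ⟨x.unpair.1, hx.symm⟩
  · rintro ⟨i, rfl⟩
    refine ⟨Encodable.encode [seg f (i + 1)], ?_⟩
    rw [Denumerable.ofNat_encode]
    have hhd : ([seg f (i + 1)] : List ℕ).getD 0 0 = seg f (i + 1) := rfl
    rw [hhd, seg, Denumerable.ofNat_encode]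
    refine ⟨⟨?_, ?_⟩, ?_⟩
    · simp [Nat.unpair_pair]
    · rw [Nat.unpair_pair]
      simp only []
      rw [List.getD_eq_getElem?_getD]
      simp [List.getElem?_map, List.getElem?_range (Nat.lt_succ_self i)]
    · intro y hy
      rw [List.mem_singleton] at hy
      exact ⟨i + 1, by rw [hy, seg]⟩

end Stmt7

/-- If `f` is total, then there is a set `B ≡ₑ graph(f)` with `C_B ≡ₛ E_{graph(f)}`. -/
theorem stmt7 (f : ℕ → ℕ) :
    ∃ B : Set ℕ, EnumEquiv B (graphSet f) ∧
      MedvedevEquiv (CProb B) (EProb (graphSet f)) := by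
  exact ⟨Set.range (Stmt7.seg f), ⟨Stmt7.enum1 f, Stmt7.enum2 f⟩,
    Stmt7.med1 f, Stmt7.med2 f⟩
end

section
/- For every uniformly e-pointed tree T ⊆ ω^{<ω} with respect to functions, there is a uniformly e-pointed tree S ⊆ 2^{<ω} with respect to sets such that S ≡_e T; moreover S can be chosen so that [S] = {χ_{graph(f)} : f ∈ [T]}, the set of characteristic functions of graphs of paths of T. -/
namespace S9

def pref (g : ℕ → ℕ) (n : ℕ) : List ℕ := (List.range n).map g

@[simp] lemma pref_length (g n) : (pref g n).length = n := by simp [pref]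

lemma pref_getElem (g : ℕ → ℕ) {n m : ℕ} (h : m < (pref g n).length) :
    (pref g n)[m] = g m := by simp [pref]

lemma pref_getD (g : ℕ → ℕ) {n m : ℕ} (h : m < n) : (pref g n).getD m 0 = g m := by
  rw [List.getD_eq_getElem _ _ (by simpa using h), pref_getElem]

lemma pref_take (g : ℕ → ℕ) (m n : ℕ) : (pref g n).take m = pref g (min m n) := by
  simp [pref, ← List.map_take, List.take_range]

lemma pref_prefix (g : ℕ → ℕ) {m n : ℕ} (h : m ≤ n) : pref g m <+: pref g n := by
  have : pref g m = (pref g n).take m := by rw [pref_take, min_eq_left h]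
  rw [this]; exact List.take_prefix _ _

lemma mem_paths {T : Set (List ℕ)} {f : ℕ → ℕ} : f ∈ Paths T ↔ ∀ n, pref f n ∈ T :=
  Iff.rfl

lemma strPrefix_iff {σ : List ℕ} {g : ℕ → ℕ} : strPrefix σ g ↔ pref g σ.length = σ :=
  Iff.rfl

lemma mem_codeTree {A : Set (List ℕ)} {x : ℕ} :
    x ∈ codeTree A ↔ Denumerable.ofNat (List ℕ) x ∈ A := by
  constructor
  · rintro ⟨σ, hσ, rfl⟩; simpa using hσ
  · intro h; exact ⟨_, h, Denumerable.encode_ofNat x⟩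

lemma exists_ext {T : Set (List ℕ)} (hTr : IsTree T) (hNL : NoLeaves T) {σ : List ℕ}
    (hσ : σ ∈ T) : ∃ n, σ ++ [n] ∈ T := by
  have h := hNL σ hσ
  rw [IsLeaf] at h
  push_neg at h
  obtain ⟨τ, hτT, hpre, hne⟩ := h hσ
  have hlt : σ.length < τ.length := by
    rcases lt_or_eq_of_le hpre.length_le with h | h
    · exact h
    · exact absurd (List.IsPrefix.eq_of_length hpre h) (Ne.symm hne)
  refine ⟨τ[σ.length], hTr ?_ hτT⟩
  have : σ ++ [τ[σ.length]] = τ.take (σ.length + 1) := by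
    rw [List.take_succ, List.getElem?_eq_getElem hlt]
    rw [List.prefix_iff_eq_take] at hpre
    simp [← hpre]
  rw [this]
  exact List.take_prefix _ _

/-- through every node of a tree with no leaves there is a path -/
lemma exists_path {T : Set (List ℕ)} (hTr : IsTree T) (hNL : NoLeaves T) {τ : List ℕ}
    (hτ : τ ∈ T) : ∃ f ∈ Paths T, pref f τ.length = τ := by
  classical
  let ext : ℕ → {σ : List ℕ // σ ∈ T} := fun n =>
    Nat.rec ⟨τ, hτ⟩ (fun _ p => ⟨p.1 ++ [(exists_ext hTr hNL p.2).choose],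
      (exists_ext hTr hNL p.2).choose_spec⟩) n
  have hlen : ∀ n, (ext n).1.length = τ.length + n := by
    intro n; induction n with
    | zero => rfl
    | succ n ih => show ((ext n).1 ++ _).length = _; simp [ih]; omega
  have hstep : ∀ n, (ext n).1 <+: (ext (n+1)).1 := fun n => ⟨_, rfl⟩
  have hmono : ∀ {m n}, m ≤ n → (ext m).1 <+: (ext n).1 := by
    intro m n h
    induction n with
    | zero => simp_all
    | succ n ih =>
      rcases Nat.lt_or_ge m (n+1) with h' | h'
      · exact (ih (by omega)).trans (hstep n)
      · have : m = n + 1 := by omega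
        subst this; rfl
  have hagree : ∀ {a b : ℕ}, a ≤ b → ∀ {k}, k < τ.length + a →
      (ext a).1.getD k 0 = (ext b).1.getD k 0 := by
    intro a b h k hk
    obtain ⟨l, hl⟩ := hmono h
    have hka : k < (ext a).1.length := by rw [hlen]; omega
    rw [← hl, List.getD_append _ _ _ _ hka]
  have hval : ∀ {n k : ℕ}, k < τ.length + n →
      (ext n).1.getD k 0 = (ext (k+1)).1.getD k 0 := by
    intro n k hk
    rcases Nat.le_total n (k+1) with h | h
    · exact hagree h hk
    · exact (hagree h (by omega)).symm
  have hpref : ∀ n, pref (fun k => (ext (k+1)).1.getD k 0) n = (ext n).1.take n := by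
    intro n
    apply List.ext_getElem
    · simp [hlen]
    · intro i h1 h2
      rw [pref_getElem, List.getElem_take]
      have hi : i < τ.length + n := by
        rw [pref_length] at h1; omega
      have e1 : (ext n).1[i]'(by rw [hlen]; omega) = (ext n).1.getD i 0 :=
        (List.getD_eq_getElem _ _ _).symm
      rw [e1]
      exact (hval hi).symm
  refine ⟨fun k => (ext (k+1)).1.getD k 0, fun n => ?_, ?_⟩
  · show pref _ n ∈ T
    rw [hpref]
    exact hTr (List.take_prefix _ _) (ext n).2
  · show pref _ τ.length = τ
    rw [hpref]
    obtain ⟨l, hl⟩ := hmono (Nat.zero_le τ.length)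
    have h0 : (ext 0).1 = τ := rfl
    rw [h0] at hl
    rw [← hl]
    exact List.take_left' rfl

lemma level_finite {T : Set (List ℕ)} (hTr : IsTree T) (hFB : FinBranching T) :
    ∀ n, {σ : List ℕ | σ ∈ T ∧ σ.length = n}.Finite := by
  intro n
  induction n with
  | zero =>
    apply Set.Finite.subset (Set.finite_singleton ([] : List ℕ))
    rintro σ ⟨-, h⟩
    simpa [List.length_eq_zero_iff] using h
  | succ n ih =>
    have : {σ : List ℕ | σ ∈ T ∧ σ.length = n + 1} ⊆
        ⋃ τ ∈ {σ : List ℕ | σ ∈ T ∧ σ.length = n},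
          (fun m => τ ++ [m]) '' {m : ℕ | τ ++ [m] ∈ T} := by
      rintro σ ⟨hσT, hσl⟩
      have hn : n < σ.length := by omega
      have htake : σ.take n ++ [σ[n]] = σ := by
        have h1 := List.take_succ (l := σ) (i := n)
        rw [List.getElem?_eq_getElem hn] at h1
        simp only [Option.toList_some] at h1
        rw [← h1, List.take_of_length_le (by omega)]
      refine Set.mem_biUnion (⟨hTr (List.take_prefix n σ) hσT, by simp [hσl]⟩ :
        σ.take n ∈ T ∧ (σ.take n).length = n) ?_
      exact ⟨σ[n], by rw [Set.mem_setOf_eq, htake]; exact hσT, htake⟩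
    apply Set.Finite.subset _ this
    exact Set.Finite.biUnion ih fun τ hτ => Set.Finite.image _ (hFB τ hτ.1)

lemma values_finite {T : Set (List ℕ)} (hTr : IsTree T) (hFB : FinBranching T) (k : ℕ) :
    {m : ℕ | ∃ f ∈ Paths T, m = Nat.pair k (f k)}.Finite := by
  apply Set.Finite.subset (Set.Finite.image (fun σ => Nat.pair k (σ.getD k 0))
    (level_finite hTr hFB (k+1)))
  rintro m ⟨f, hf, rfl⟩
  refine ⟨pref f (k+1), ⟨hf (k+1), by simp⟩, ?_⟩
  show Nat.pair k ((pref f (k+1)).getD k 0) = Nat.pair k (f k)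
  rw [pref_getD f (Nat.lt_succ_self k)]

lemma values_bound {T : Set (List ℕ)} (hTr : IsTree T) (hFB : FinBranching T) (k : ℕ) :
    ∃ N, ∀ f ∈ Paths T, Nat.pair k (f k) ≤ N := by
  obtain ⟨N, hN⟩ := (values_finite hTr hFB k).bddAbove
  exact ⟨N, fun f hf => hN ⟨f, hf, rfl⟩⟩

def chi (f : ℕ → ℕ) : ℕ → ℕ := fun m => if f m.unpair.1 = m.unpair.2 then 1 else 0

def Sset (T : Set (List ℕ)) : Set (List ℕ) := {σ | ∃ f ∈ Paths T, strPrefix σ (chi f)}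

lemma chi_le_one (f : ℕ → ℕ) (m : ℕ) : chi f m ≤ 1 := by
  unfold chi; split <;> simp

lemma chi_eq_one_iff {f : ℕ → ℕ} {m : ℕ} : chi f m = 1 ↔ f m.unpair.1 = m.unpair.2 := by
  unfold chi; split <;> simp_all

lemma chi_pair_eq_one {f : ℕ → ℕ} {k y : ℕ} : chi f (Nat.pair k y) = 1 ↔ f k = y := by
  rw [chi_eq_one_iff, Nat.unpair_pair]

lemma mem_Sset {T : Set (List ℕ)} {σ : List ℕ} :
    σ ∈ Sset T ↔ ∃ f ∈ Paths T, pref (chi f) σ.length = σ := Iff.rfl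

lemma Sset_isTree (T : Set (List ℕ)) : IsTree (Sset T) := by
  rintro σ' σ hpre ⟨f, hf, hσ⟩
  refine ⟨f, hf, ?_⟩
  rw [strPrefix_iff] at hσ ⊢
  have h1 : σ' = σ.take σ'.length := List.prefix_iff_eq_take.1 hpre
  conv_rhs => rw [h1, ← hσ]
  rw [pref_take, min_eq_left hpre.length_le]

lemma Sset_binary (T : Set (List ℕ)) : ∀ σ ∈ Sset T, ∀ i ∈ σ, i ≤ 1 := by
  rintro σ ⟨f, _, hσ⟩ i hi
  rw [← hσ] at hi
  obtain ⟨m, _, rfl⟩ := List.mem_map.1 hi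
  exact chi_le_one f m

lemma chi_mem_paths {T : Set (List ℕ)} {f : ℕ → ℕ} (hf : f ∈ Paths T) :
    chi f ∈ Paths (Sset T) := by
  intro n
  exact ⟨f, hf, by rw [strPrefix_iff]; simp [pref]⟩

lemma Sset_noLeaves (T : Set (List ℕ)) : NoLeaves (Sset T) := by
  rintro σ ⟨f, hf, hσ⟩ ⟨-, hleaf⟩
  rw [strPrefix_iff] at hσ
  have h1 : pref (chi f) (σ.length + 1) ∈ Sset T :=
    ⟨f, hf, by rw [strPrefix_iff]; simp [pref]⟩
  have h2 : σ <+: pref (chi f) (σ.length + 1) := by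
    have := pref_prefix (chi f) (Nat.le_succ σ.length)
    rwa [hσ] at this
  have h3 := hleaf _ h1 h2
  have h4 : (pref (chi f) (σ.length + 1)).length = σ.length := by rw [h3]
  simp at h4

lemma pref_eq_iff {g h : ℕ → ℕ} {n : ℕ} : pref g n = pref h n ↔ ∀ m < n, g m = h m := by
  constructor
  · intro he m hm
    have h1 : (pref g n).getD m 0 = (pref h n).getD m 0 := by rw [he]
    rwa [pref_getD _ hm, pref_getD _ hm] at h1
  · intro he
    apply List.ext_getElem (by simp)
    intro i h1 h2
    rw [pref_getElem, pref_getElem]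
    exact he i (by simpa using h1)

lemma paths_Sset {T : Set (List ℕ)} (hTr : IsTree T) (hFB : FinBranching T) :
    Paths (Sset T) = chi '' Paths T := by
  apply Set.Subset.antisymm
  · intro g hg
    have h : ∀ n, ∃ f ∈ Paths T, ∀ m < n, chi f m = g m := by
      intro n
      obtain ⟨f, hf, hp⟩ := hg n
      exact ⟨f, hf, fun m hm => pref_eq_iff.1 (by simpa [strPrefix, pref] using hp) m hm⟩
    -- g is 0-1 valued
    have hg01 : ∀ m, g m ≤ 1 := by
      intro m
      obtain ⟨f, -, hfm⟩ := h (m+1)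
      rw [← hfm m (Nat.lt_succ_self m)]
      exact chi_le_one f m
    -- existence of values
    have hex : ∀ k, ∃ y, g (Nat.pair k y) = 1 := by
      intro k
      obtain ⟨N, hN⟩ := values_bound hTr hFB k
      obtain ⟨f, hf, hfm⟩ := h (N+1)
      refine ⟨f k, ?_⟩
      rw [← hfm _ (by have := hN f hf; omega)]
      exact chi_pair_eq_one.2 rfl
    -- uniqueness of values
    have huniq : ∀ k y y', g (Nat.pair k y) = 1 → g (Nat.pair k y') = 1 → y = y' := by
      intro k y y' hy hy'
      obtain ⟨f, hf, hfm⟩ := h (max (Nat.pair k y) (Nat.pair k y') + 1)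
      have h1 : f k = y := chi_pair_eq_one.1 (by rw [hfm _ (by omega)]; exact hy)
      have h2 : f k = y' := chi_pair_eq_one.1 (by rw [hfm _ (by omega)]; exact hy')
      omega
    classical
    set F : ℕ → ℕ := fun k => (hex k).choose with hFdef
    have hF : ∀ k, g (Nat.pair k (F k)) = 1 := fun k => (hex k).choose_spec
    have hchi : chi F = g := by
      funext m
      have hm : Nat.pair m.unpair.1 m.unpair.2 = m := Nat.pair_unpair m
      by_cases hc : F m.unpair.1 = m.unpair.2
      · have : chi F m = 1 := chi_eq_one_iff.2 hc
        rw [this, ← hm, ← hc]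
        exact (hF _).symm
      · have h0 : chi F m = 0 := by unfold chi; rw [if_neg hc]
        rw [h0]
        by_contra hne
        have hgm : g m = 1 := by have := hg01 m; omega
        exact hc (huniq m.unpair.1 (F m.unpair.1) m.unpair.2 (hF _) (by rwa [hm]))
    have hFT : F ∈ Paths T := by
      intro n
      obtain ⟨f, hf, hfm⟩ :=
        h (((Finset.range n).sup fun k => Nat.pair k (F k)) + 1)
      have hagree : ∀ k < n, f k = F k := by
        intro k hk
        apply chi_pair_eq_one.1
        rw [hfm _ (by
          have : Nat.pair k (F k) ≤ (Finset.range n).sup fun k => Nat.pair k (F k) :=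
            Finset.le_sup (f := fun k => Nat.pair k (F k)) (Finset.mem_range.2 hk)
          omega)]
        exact hF k
      have : pref F n = pref f n := pref_eq_iff.2 fun m hm => (hagree m hm).symm
      rw [mem_paths] at hf
      rw [show (List.range n).map F = pref F n from rfl, this]
      exact hf n
    exact ⟨F, hFT, hchi⟩
  · rintro g ⟨f, hf, rfl⟩
    exact chi_mem_paths hf

def chkST (x t : ℕ) : Bool :=
  ((Denumerable.ofNat (List ℕ) x).all fun i => decide (i ≤ 1)) &&
  ((List.range (Denumerable.ofNat (List ℕ) x).length).all fun m =>
    decide (m.unpair.1 < (Denumerable.ofNat (List ℕ) t).length) &&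
    decide (decide ((Denumerable.ofNat (List ℕ) x).getD m 0 = 1) =
     decide ((Denumerable.ofNat (List ℕ) t).getD m.unpair.1 0 = m.unpair.2)))

def chkTS (x s : ℕ) : Bool :=
  (List.range (Denumerable.ofNat (List ℕ) x).length).all fun k =>
    decide (Nat.pair k ((Denumerable.ofNat (List ℕ) x).getD k 0) <
      (Denumerable.ofNat (List ℕ) s).length) &&
    decide ((Denumerable.ofNat (List ℕ) s).getD
      (Nat.pair k ((Denumerable.ofNat (List ℕ) x).getD k 0)) 0 = 1)

lemma chkST_iff {x t : ℕ} : chkST x t = true ↔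
    ((∀ i ∈ Denumerable.ofNat (List ℕ) x, i ≤ 1) ∧
      ∀ m < (Denumerable.ofNat (List ℕ) x).length,
        m.unpair.1 < (Denumerable.ofNat (List ℕ) t).length ∧
        ((Denumerable.ofNat (List ℕ) x).getD m 0 = 1 ↔
          (Denumerable.ofNat (List ℕ) t).getD m.unpair.1 0 = m.unpair.2)) := by
  simp [chkST, List.all_eq_true, Bool.and_eq_true, decide_eq_true_eq,
    decide_eq_decide, List.mem_range]

lemma chkTS_iff {x s : ℕ} : chkTS x s = true ↔
    ∀ k < (Denumerable.ofNat (List ℕ) x).length,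
      Nat.pair k ((Denumerable.ofNat (List ℕ) x).getD k 0) <
        (Denumerable.ofNat (List ℕ) s).length ∧
      (Denumerable.ofNat (List ℕ) s).getD
        (Nat.pair k ((Denumerable.ofNat (List ℕ) x).getD k 0)) 0 = 1 := by
  simp [chkTS, List.all_eq_true, Bool.and_eq_true, decide_eq_true_eq, List.mem_range]

lemma claim_ST {T : Set (List ℕ)} (hTr : IsTree T) (hNL : NoLeaves T) (x : ℕ) :
    (∃ t, chkST x t = true ∧ t ∈ codeTree T) ↔ x ∈ codeTree (Sset T) := by
  constructor
  · rintro ⟨t, hchk, ht⟩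
    rw [mem_codeTree] at ht ⊢
    obtain ⟨hbin, hcond⟩ := chkST_iff.1 hchk
    obtain ⟨f, hf, hftau⟩ := exists_path hTr hNL ht
    refine ⟨f, hf, ?_⟩
    rw [strPrefix_iff]
    apply List.ext_getElem (by simp)
    intro i h1 h2
    rw [pref_getElem]
    obtain ⟨hlt, hiff⟩ := hcond i h2
    have hfv : f i.unpair.1 = (Denumerable.ofNat (List ℕ) t).getD i.unpair.1 0 := by
      rw [← hftau, pref_getD _ hlt]
    have hgetd : (Denumerable.ofNat (List ℕ) x)[i] = (Denumerable.ofNat (List ℕ) x).getD i 0 := (List.getD_eq_getElem _ _ _).symm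
    rw [hgetd]
    by_cases hc : (Denumerable.ofNat (List ℕ) t).getD i.unpair.1 0 = i.unpair.2
    · rw [hiff.2 hc]
      exact chi_eq_one_iff.2 (by rw [hfv]; exact hc)
    · have h5 : chi f i = 0 := by
        unfold chi; rw [if_neg (by rw [hfv]; exact hc)]
      have h6 : (Denumerable.ofNat (List ℕ) x).getD i 0 ≠ 1 := fun hh => hc (hiff.1 hh)
      have h7 : (Denumerable.ofNat (List ℕ) x).getD i 0 ≤ 1 := by
        apply hbin
        rw [hgetd.symm]
        exact List.getElem_mem h2
      omega
  · intro hx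
    rw [mem_codeTree] at hx
    obtain ⟨f, hf, hsp⟩ := hx
    rw [strPrefix_iff] at hsp
    set L := ((Finset.range (Denumerable.ofNat (List ℕ) x).length).sup fun m => m.unpair.1) + 1 with hLdef
    refine ⟨Encodable.encode (pref f L), ?_, mem_codeTree.2 (by
      rw [Denumerable.ofNat_encode]; exact hf L)⟩
    rw [chkST_iff, Denumerable.ofNat_encode]
    constructor
    · intro i hi
      rw [← hsp] at hi
      obtain ⟨m, -, rfl⟩ := List.mem_map.1 hi
      exact chi_le_one f m
    · intro m hm
      have hlt : m.unpair.1 < L := by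
        have : m.unpair.1 ≤ (Finset.range (Denumerable.ofNat (List ℕ) x).length).sup fun m => m.unpair.1 :=
          Finset.le_sup (f := fun m => (Nat.unpair m).1) (Finset.mem_range.2 hm)
        omega
      refine ⟨by simpa using hlt, ?_⟩
      rw [pref_getD _ hlt, ← hsp, pref_getD _ hm]
      exact chi_eq_one_iff

lemma claim_TS {T : Set (List ℕ)} (hTr : IsTree T) (hNL : NoLeaves T) (x : ℕ) :
    (∃ s, chkTS x s = true ∧ s ∈ codeTree (Sset T)) ↔ x ∈ codeTree T := by
  constructor
  · rintro ⟨s, hchk, hs⟩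
    rw [mem_codeTree] at hs ⊢
    obtain ⟨f, hf, hsp⟩ := hs
    rw [strPrefix_iff] at hsp
    have hcond := chkTS_iff.1 hchk
    have hfv : ∀ k < (Denumerable.ofNat (List ℕ) x).length, f k = (Denumerable.ofNat (List ℕ) x).getD k 0 := by
      intro k hk
      obtain ⟨hlt, h1⟩ := hcond k hk
      apply chi_pair_eq_one.1
      rw [← pref_getD (chi f) hlt, hsp]
      exact h1
    have : (Denumerable.ofNat (List ℕ) x) = pref f (Denumerable.ofNat (List ℕ) x).length := by
      apply List.ext_getElem (by simp)
      intro i h1 h2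
      rw [pref_getElem, hfv i h1, List.getD_eq_getElem _ _ h1]
    rw [this]
    exact hf (Denumerable.ofNat (List ℕ) x).length
  · intro hx
    rw [mem_codeTree] at hx
    obtain ⟨f, hf, hftau⟩ := exists_path hTr hNL hx
    set N := ((Finset.range (Denumerable.ofNat (List ℕ) x).length).sup fun k => Nat.pair k ((Denumerable.ofNat (List ℕ) x).getD k 0)) + 1 with hNdef
    refine ⟨Encodable.encode (pref (chi f) N), ?_, mem_codeTree.2 (by
      rw [Denumerable.ofNat_encode]; exact chi_mem_paths hf N)⟩
    rw [chkTS_iff, Denumerable.ofNat_encode]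
    intro k hk
    have hlt : Nat.pair k ((Denumerable.ofNat (List ℕ) x).getD k 0) < N := by
      have : Nat.pair k ((Denumerable.ofNat (List ℕ) x).getD k 0) ≤
          (Finset.range (Denumerable.ofNat (List ℕ) x).length).sup fun k => Nat.pair k ((Denumerable.ofNat (List ℕ) x).getD k 0) :=
        Finset.le_sup (f := fun k => Nat.pair k ((Denumerable.ofNat (List ℕ) x).getD k 0)) (Finset.mem_range.2 hk)
      omega
    refine ⟨by simpa using hlt, ?_⟩
    rw [pref_getD _ hlt]
    apply chi_pair_eq_one.2
    rw [← hftau, pref_getD _ hk]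

lemma list_all_primrec {α β : Type} [Primcodable α] [Primcodable β] {f : α → List β}
    {p : α → β → Bool} (hf : Primrec f) (hp : Primrec₂ p) :
    Primrec fun a => (f a).all (p a) := by
  have hh : Primrec fun q : α × (β × Bool) => p q.1 q.2.1 && q.2.2 :=
    Primrec.and.comp (hp.comp Primrec.fst (Primrec.fst.comp Primrec.snd))
      (Primrec.snd.comp Primrec.snd)
  have h := Primrec.list_foldr hf (Primrec.const true) hh.to₂
  apply h.of_eq
  intro a
  generalize f a = l
  induction l with
  | nil => rfl
  | cons b l ih => simp [List.all_cons, ← ih]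

lemma list_any_primrec {α β : Type} [Primcodable α] [Primcodable β] {f : α → List β}
    {p : α → β → Bool} (hf : Primrec f) (hp : Primrec₂ p) :
    Primrec fun a => (f a).any (p a) := by
  have hh : Primrec fun q : α × (β × Bool) => p q.1 q.2.1 || q.2.2 :=
    Primrec.or.comp (hp.comp Primrec.fst (Primrec.fst.comp Primrec.snd))
      (Primrec.snd.comp Primrec.snd)
  have h := Primrec.list_foldr hf (Primrec.const false) hh.to₂
  apply h.of_eq
  intro a
  generalize f a = l
  induction l with
  | nil => rfl
  | cons b l ih => simp [List.any_cons, ← ih]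

lemma chkST_primrec : Primrec₂ chkST := by
  have hd : Primrec (Denumerable.ofNat (List ℕ)) := Primrec.ofNat _
  have hA : Primrec fun q : ℕ × ℕ =>
      (Denumerable.ofNat (List ℕ) q.1).all (fun i => decide (i ≤ 1)) :=
    list_all_primrec (hd.comp Primrec.fst)
      ((Primrec.nat_le.comp Primrec.snd (Primrec.const 1)).decide.to₂)
  have hB : Primrec fun q : ℕ × ℕ =>
      (List.range (Denumerable.ofNat (List ℕ) q.1).length).all fun m =>
        decide (m.unpair.1 < (Denumerable.ofNat (List ℕ) q.2).length) &&
        decide (decide ((Denumerable.ofNat (List ℕ) q.1).getD m 0 = 1) =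
         decide ((Denumerable.ofNat (List ℕ) q.2).getD m.unpair.1 0 = m.unpair.2)) := by
    apply list_all_primrec
      (Primrec.list_range.comp (Primrec.list_length.comp (hd.comp Primrec.fst)))
    have b1 : Primrec fun r : (ℕ × ℕ) × ℕ =>
        decide ((Nat.unpair r.2).1 < (Denumerable.ofNat (List ℕ) r.1.2).length) :=
      (Primrec.nat_lt.comp (Primrec.fst.comp (Primrec.unpair.comp Primrec.snd))
        (Primrec.list_length.comp (hd.comp (Primrec.snd.comp Primrec.fst)))).decide
    have d1 : Primrec fun r : (ℕ × ℕ) × ℕ =>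
        decide ((Denumerable.ofNat (List ℕ) r.1.1).getD r.2 0 = 1) :=
      (Primrec.eq.comp ((Primrec.list_getD 0).comp
        (hd.comp (Primrec.fst.comp Primrec.fst)) Primrec.snd) (Primrec.const 1)).decide
    have d2 : Primrec fun r : (ℕ × ℕ) × ℕ =>
        decide ((Denumerable.ofNat (List ℕ) r.1.2).getD (Nat.unpair r.2).1 0 =
          (Nat.unpair r.2).2) :=
      (Primrec.eq.comp ((Primrec.list_getD 0).comp
        (hd.comp (Primrec.snd.comp Primrec.fst))
        (Primrec.fst.comp (Primrec.unpair.comp Primrec.snd)))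
        (Primrec.snd.comp (Primrec.unpair.comp Primrec.snd))).decide
    exact (Primrec.and.comp b1 (Primrec.eq.comp d1 d2).decide).to₂
  exact Primrec₂.mk ((Primrec.and.comp hA hB).of_eq fun q => rfl)

lemma chkTS_primrec : Primrec₂ chkTS := by
  have hd : Primrec (Denumerable.ofNat (List ℕ)) := Primrec.ofNat _
  have hB : Primrec fun q : ℕ × ℕ =>
      (List.range (Denumerable.ofNat (List ℕ) q.1).length).all fun k =>
        decide (Nat.pair k ((Denumerable.ofNat (List ℕ) q.1).getD k 0) <
          (Denumerable.ofNat (List ℕ) q.2).length) &&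
        decide ((Denumerable.ofNat (List ℕ) q.2).getD
          (Nat.pair k ((Denumerable.ofNat (List ℕ) q.1).getD k 0)) 0 = 1) := by
    apply list_all_primrec
      (Primrec.list_range.comp (Primrec.list_length.comp (hd.comp Primrec.fst)))
    have hpair : Primrec fun r : (ℕ × ℕ) × ℕ =>
        Nat.pair r.2 ((Denumerable.ofNat (List ℕ) r.1.1).getD r.2 0) :=
      Primrec₂.natPair.comp Primrec.snd ((Primrec.list_getD 0).comp
        (hd.comp (Primrec.fst.comp Primrec.fst)) Primrec.snd)
    have b1 : Primrec fun r : (ℕ × ℕ) × ℕ =>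
        decide (Nat.pair r.2 ((Denumerable.ofNat (List ℕ) r.1.1).getD r.2 0) <
          (Denumerable.ofNat (List ℕ) r.1.2).length) :=
      (Primrec.nat_lt.comp hpair
        (Primrec.list_length.comp (hd.comp (Primrec.snd.comp Primrec.fst)))).decide
    have b2 : Primrec fun r : (ℕ × ℕ) × ℕ =>
        decide ((Denumerable.ofNat (List ℕ) r.1.2).getD
          (Nat.pair r.2 ((Denumerable.ofNat (List ℕ) r.1.1).getD r.2 0)) 0 = 1) :=
      (Primrec.eq.comp ((Primrec.list_getD 0).comp
        (hd.comp (Primrec.snd.comp Primrec.fst)) hpair) (Primrec.const 1)).decide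
    exact (Primrec.and.comp b1 b2).to₂
  exact Primrec₂.mk (hB.of_eq fun q => rfl)

lemma rfind_const_dom (q : ℕ → Bool) :
    (Nat.rfind fun s => Part.some (q s)).Dom ↔ ∃ s, q s = true := by
  refine (Nat.rfind_dom (p := fun s => Part.some (q s))).trans ?_
  constructor
  · rintro ⟨n, hn, -⟩
    exact ⟨n, (Part.mem_some_iff.1 hn).symm⟩
  · rintro ⟨s, hs⟩
    exact ⟨s, Part.mem_some_iff.2 hs.symm, fun _ => trivial⟩

lemma op_single (D : ℕ → ℕ → Bool) (hD : Primrec₂ D) :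
    ∃ e : ℕ, ∀ B : Set ℕ, enumOpApply e B = {x | ∃ t, D x t = true ∧ t ∈ B} := by
  classical
  set b : ℕ → Bool := fun z =>
    (Denumerable.ofNat (List ℕ) z.unpair.2).any (D z.unpair.1) with hbdef
  have hbc : Computable b := by
    apply Primrec.to_comp
    exact list_any_primrec ((Primrec.ofNat _).comp (Primrec.snd.comp Primrec.unpair))
      ((hD.comp (Primrec.fst.comp (Primrec.unpair.comp Primrec.fst)) Primrec.snd).to₂)
  set h : ℕ →. ℕ := fun z => Nat.rfind fun _ => Part.some (b z) with hhdef
  have hp : Partrec h := by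
    apply Partrec.rfind
    exact ((hbc.comp Computable.fst).to₂).partrec₂
  obtain ⟨c, hcode⟩ := Nat.Partrec.Code.exists_code.1 (Partrec.nat_iff.1 hp)
  refine ⟨Encodable.encode c, fun B => ?_⟩
  ext x
  simp only [enumOpApply, Set.mem_setOf_eq, Denumerable.ofNat_encode, hcode]
  have hdom : ∀ u : ℕ, (h (Nat.pair x u)).Dom ↔
      ((Denumerable.ofNat (List ℕ) u).any (D x) = true) := by
    intro u
    rw [hhdef]
    simp only [rfind_const_dom, hbdef, Nat.unpair_pair]
    exact ⟨fun ⟨_, hs⟩ => hs, fun hs => ⟨0, hs⟩⟩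
  constructor
  · rintro ⟨u, hu, hsub⟩
    obtain ⟨t, htmem, hDt⟩ := List.any_eq_true.1 ((hdom u).1 hu)
    exact ⟨t, hDt, hsub t htmem⟩
  · rintro ⟨t, hDt, htB⟩
    refine ⟨Encodable.encode [t], (hdom _).2 ?_, ?_⟩
    · rw [Denumerable.ofNat_encode]
      exact List.any_eq_true.2 ⟨t, List.mem_singleton_self t, hDt⟩
    · intro y hy
      rw [Denumerable.ofNat_encode, List.mem_singleton] at hy
      subst hy; exact htB

lemma op_comp (D : ℕ → ℕ → Bool) (hD : Primrec₂ D) (e₀ : ℕ) :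
    ∃ e : ℕ, ∀ B : Set ℕ,
      enumOpApply e B = {x | ∃ t, D x t = true ∧ t ∈ enumOpApply e₀ B} := by
  classical
  set c₀ : Nat.Partrec.Code := Denumerable.ofNat Nat.Partrec.Code e₀ with hc₀
  set b : ℕ → ℕ → Bool := fun z s =>
    (List.range s).any fun t => D z.unpair.1 t &&
      (Nat.Partrec.Code.evaln s c₀ (Nat.pair t z.unpair.2)).isSome with hbdef
  have hbc : Computable₂ b := by
    apply Primrec₂.to_comp
    apply Primrec₂.mk
    apply list_any_primrec (Primrec.list_range.comp Primrec.snd)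
    have pD : Primrec fun r : (ℕ × ℕ) × ℕ => D (Nat.unpair r.1.1).1 r.2 :=
      hD.comp (Primrec.fst.comp (Primrec.unpair.comp (Primrec.fst.comp Primrec.fst)))
        Primrec.snd
    have pe : Primrec fun r : (ℕ × ℕ) × ℕ =>
        (Nat.Partrec.Code.evaln r.1.2 c₀ (Nat.pair r.2 (Nat.unpair r.1.1).2)).isSome :=
      Primrec.option_isSome.comp (Nat.Partrec.Code.primrec_evaln.comp
        (Primrec.pair (Primrec.pair (Primrec.snd.comp Primrec.fst) (Primrec.const c₀))
          (Primrec₂.natPair.comp Primrec.snd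
            (Primrec.snd.comp (Primrec.unpair.comp (Primrec.fst.comp Primrec.fst))))))
    exact (Primrec.and.comp pD pe).to₂
  set h : ℕ →. ℕ := fun z => Nat.rfind fun s => Part.some (b z s) with hhdef
  have hp : Partrec h := Partrec.rfind (hbc.partrec₂)
  obtain ⟨c, hcode⟩ := Nat.Partrec.Code.exists_code.1 (Partrec.nat_iff.1 hp)
  refine ⟨Encodable.encode c, fun B => ?_⟩
  ext x
  simp only [enumOpApply, Set.mem_setOf_eq, Denumerable.ofNat_encode, hcode]
  have hdom : ∀ u : ℕ, (h (Nat.pair x u)).Dom ↔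
      (∃ t, D x t = true ∧ (c₀.eval (Nat.pair t u)).Dom) := by
    intro u
    rw [hhdef]
    simp only [rfind_const_dom, hbdef, Nat.unpair_pair]
    constructor
    · rintro ⟨s, hs⟩
      obtain ⟨t, -, hDt⟩ := List.any_eq_true.1 hs
      rw [Bool.and_eq_true] at hDt
      obtain ⟨hD1, hev⟩ := hDt
      obtain ⟨y, hy⟩ := Option.isSome_iff_exists.1 hev
      exact ⟨t, hD1, Part.dom_iff_mem.2 ⟨y, Nat.Partrec.Code.evaln_sound hy⟩⟩
    · rintro ⟨t, hD1, hdm⟩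
      obtain ⟨y, hy⟩ := Part.dom_iff_mem.1 hdm
      obtain ⟨k, hk⟩ := Nat.Partrec.Code.evaln_complete.1 hy
      refine ⟨max k (t + 1), List.any_eq_true.2 ⟨t, List.mem_range.2 (by omega), ?_⟩⟩
      rw [Bool.and_eq_true]
      refine ⟨hD1, Option.isSome_iff_exists.2 ⟨y, ?_⟩⟩
      exact Nat.Partrec.Code.evaln_mono (le_max_left _ _) hk
  constructor
  · rintro ⟨u, hu, hsub⟩
    obtain ⟨t, hD1, hdm⟩ := (hdom u).1 hu
    exact ⟨t, hD1, u, hdm, hsub⟩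
  · rintro ⟨t, hD1, u, hdm, hsub⟩
    exact ⟨u, (hdom u).2 ⟨t, hD1, hdm⟩, hsub⟩

lemma chi_one_graph (f : ℕ → ℕ) : {n | chi f n = 1} = graphSet f := by
  ext m
  rw [Set.mem_setOf_eq, chi_eq_one_iff]
  constructor
  · intro h
    refine ⟨m.unpair.1, ?_⟩
    show Nat.pair m.unpair.1 (f m.unpair.1) = m
    rw [h]
    exact Nat.pair_unpair m
  · rintro ⟨n, rfl⟩
    simp [Nat.unpair_pair]

end S9

/-- For every uniformly e-pointed tree `T` w.r.t. functions there is a uniformly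
e-pointed tree `S ⊆ 2^{<ω}` w.r.t. sets with `S ≡ₑ T`, whose paths are exactly
the characteristic functions of the graphs of the paths of `T`. -/
theorem stmt9 (T : Set (List ℕ)) (hT : UEPfun T) :
    ∃ S : Set (List ℕ), UEPset S ∧ EnumEquiv (codeTree S) (codeTree T) ∧
      Paths S =
        (fun f => fun m : ℕ => if f m.unpair.1 = m.unpair.2 then 1 else 0) ''
          Paths T := by
  obtain ⟨hTr, hFB, hNL, e₀, he₀⟩ := hT
  refine ⟨S9.Sset T, ⟨S9.Sset_isTree T, S9.Sset_binary T, S9.Sset_noLeaves T, ?_⟩,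
    ⟨?_, ?_⟩, ?_⟩
  · obtain ⟨e, hee⟩ := S9.op_comp S9.chkST S9.chkST_primrec e₀
    refine ⟨e, fun g hg => ?_⟩
    rw [S9.paths_Sset hTr hFB] at hg
    obtain ⟨f, hf, rfl⟩ := hg
    rw [show {n | S9.chi f n = 1} = graphSet f from S9.chi_one_graph f, hee]
    ext x
    rw [Set.mem_setOf_eq, he₀ f hf]
    exact S9.claim_ST hTr hNL x
  · obtain ⟨e, hee⟩ := S9.op_single S9.chkST S9.chkST_primrec
    refine ⟨e, ?_⟩
    rw [hee (codeTree T)]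
    ext x
    rw [Set.mem_setOf_eq]
    exact S9.claim_ST hTr hNL x
  · obtain ⟨e, hee⟩ := S9.op_single S9.chkTS S9.chkTS_primrec
    refine ⟨e, ?_⟩
    rw [hee]
    ext x
    rw [Set.mem_setOf_eq]
    exact S9.claim_TS hTr hNL x
  · exact S9.paths_Sset hTr hFB
end

section
/- There is a finitely branching tree A ⊆ ω^{<ω} such that: A has no leaves; A (coded as a subset of ω) is quasiminimal; and ran(π₁ ∘ f) = A for every f ∈ [A], where π₁ is the second projection of the recursive pairing function. In particular, A is a uniformly e-pointed tree with respect to functions. -/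
namespace S16

abbrev Str := List ℕ
abbrev Tr := List (List ℕ)

/-- second components of the entries of a string -/
def trace (σ : Str) : List ℕ := σ.map fun e => e.unpair.2

def codesL (T : Tr) : List ℕ := T.map Encodable.encode

/-- backlog list of leaf `ℓ` relative to finite tree `p` -/
def Dl (p : Tr) (ℓ : Str) : List ℕ := (codesL p).filter (fun x => decide (x ∉ trace ℓ))

def tval (σ : Str) (i : ℕ) : ℕ := (σ.getD i 0).unpair.2

def isLf (T : Tr) (σ : Str) : Prop := ∀ τ ∈ T, σ <+: τ → τ = σ

def PC (T : Tr) : Prop := ∀ σ ∈ T, ∀ τ : Str, τ <+: σ → τ ∈ T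

def lpf (σ : Str) (best τ : Str) : Str := if τ <+: σ ∧ best.length < τ.length then τ else best

/-- longest prefix of `σ` belonging to `p` -/
def longP (p : Tr) (σ : Str) : Str := p.foldl (lpf σ) []

/-- legality of finite tree `T` as an extension of the condition `p` -/
def Leg (p T : Tr) : Prop :=
  (∀ σ ∈ p, σ ∈ T) ∧ PC T ∧
  (∀ σ ∈ T, σ ∉ p → σ ≠ [] ∧
     (∀ τ ∈ p, τ <+: σ → τ.length + 1 = σ.length → isLf p τ)) ∧
  (∀ σ ∈ T, σ ∉ p → ∀ i, (longP p σ).length ≤ i → i < σ.length →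
      (i - (longP p σ).length < (Dl p (longP p σ)).length →
         tval σ i = (Dl p (longP p σ)).getD (i - (longP p σ).length) 0) ∧
      ((Dl p (longP p σ)).length ≤ i - (longP p σ).length → tval σ i ∈ codesL T)) ∧
  (∀ σ ∈ T, σ ∉ p → isLf T σ → (longP p σ).length + (Dl p (longP p σ)).length ≤ σ.length)

lemma prefix_eq_of_length {σ τ₁ τ₂ : Str} (h1 : τ₁ <+: σ) (h2 : τ₂ <+: σ)
    (h : τ₁.length = τ₂.length) : τ₁ = τ₂ :=
  (List.prefix_of_prefix_length_le h1 h2 h.le).eq_of_length h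

lemma lpf_spec (σ : Str) (l : List Str) (b : Str) (hb : b <+: σ) :
    (l.foldl (lpf σ) b = b ∨ (l.foldl (lpf σ) b ∈ l)) ∧
    (l.foldl (lpf σ) b <+: σ) ∧
    b.length ≤ (l.foldl (lpf σ) b).length ∧
    ∀ τ ∈ l, τ <+: σ → τ.length ≤ (l.foldl (lpf σ) b).length := by
  induction l generalizing b with
  | nil => exact ⟨Or.inl rfl, hb, le_rfl, by simp⟩
  | cons a l ih =>
    rw [List.foldl_cons]
    by_cases h : a <+: σ ∧ b.length < a.length
    · have := ih a h.1
      rw [show lpf σ b a = a from if_pos h] at *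
      refine ⟨?_, this.2.1, le_trans h.2.le this.2.2.1, ?_⟩
      · rcases this.1 with h' | h'
        · exact Or.inr (by simp [h'])
        · exact Or.inr (List.mem_cons_of_mem _ h')
      · intro τ hτ hpre
        rcases List.mem_cons.mp hτ with rfl | hτ
        · exact this.2.2.1
        · exact this.2.2.2 τ hτ hpre
    · have := ih b hb
      rw [show lpf σ b a = b from if_neg h] at *
      refine ⟨?_, this.2.1, this.2.2.1, ?_⟩
      · rcases this.1 with h' | h'
        · exact Or.inl h'
        · exact Or.inr (List.mem_cons_of_mem _ h')
      · intro τ hτ hpre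
        rcases List.mem_cons.mp hτ with rfl | hτ
        · push_neg at h
          exact le_trans (h hpre) this.2.2.1
        · exact this.2.2.2 τ hτ hpre

lemma longP_spec (p : Tr) (σ : Str) (hp : ([] : Str) ∈ p) :
    longP p σ ∈ p ∧ longP p σ <+: σ ∧
    ∀ τ ∈ p, τ <+: σ → τ.length ≤ (longP p σ).length := by
  have := lpf_spec σ p [] (List.nil_prefix)
  refine ⟨?_, this.2.1, this.2.2.2⟩
  rcases this.1 with h | h
  · unfold longP; rw [h]; exact hp
  · exact h

/-- `longP` is the unique maximal prefix in `p`. -/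
lemma longP_eq (p : Tr) (σ m : Str) (hp : ([] : Str) ∈ p) (hm : m ∈ p) (hpre : m <+: σ)
    (hmax : ∀ τ ∈ p, τ <+: σ → τ.length ≤ m.length) : longP p σ = m := by
  obtain ⟨h1, h2, h3⟩ := longP_spec p σ hp
  exact prefix_eq_of_length h2 hpre (le_antisymm (hmax _ h1 h2) (h3 m hm hpre))

lemma mem_Dl {p : Tr} {ℓ : Str} {x : ℕ} : x ∈ Dl p ℓ ↔ x ∈ codesL p ∧ x ∉ trace ℓ := by
  simp [Dl, List.mem_filter]

lemma Dl_subset {p : Tr} {ℓ : Str} : ∀ x ∈ Dl p ℓ, x ∈ codesL p :=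
  fun _ hx => (mem_Dl.mp hx).1

lemma codesL_mono {T T' : Tr} (h : ∀ σ ∈ T, σ ∈ T') : ∀ x ∈ codesL T, x ∈ codesL T' := by
  intro x hx
  simp only [codesL, List.mem_map] at *
  obtain ⟨σ, hσ, rfl⟩ := hx
  exact ⟨σ, h σ hσ, rfl⟩

lemma leg_refl {p : Tr} (h : PC p) : Leg p p := by
  refine ⟨fun σ h => h, h, fun σ h1 h2 => absurd h1 h2, fun σ h1 h2 => absurd h1 h2,
    fun σ h1 h2 => absurd h1 h2⟩

lemma leg_subset {p T : Tr} (h : Leg p T) : ∀ σ ∈ p, σ ∈ T := h.1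

/-- union of two legal extensions is legal -/
lemma leg_union {p T T' : Tr} (h : Leg p T) (h' : Leg p T') : Leg p (T ++ T') := by
  obtain ⟨s1, s2, s3, s4, s5⟩ := h
  obtain ⟨t1, t2, t3, t4, t5⟩ := h'
  have hmem : ∀ σ : Str, σ ∈ T ++ T' ↔ σ ∈ T ∨ σ ∈ T' := by intro σ; simp
  refine ⟨fun σ hσ => (hmem σ).mpr (Or.inl (s1 σ hσ)), ?_, ?_, ?_, ?_⟩
  · intro σ hσ τ hτ
    rcases (hmem σ).mp hσ with h | h
    · exact (hmem τ).mpr (Or.inl (s2 σ h τ hτ))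
    · exact (hmem τ).mpr (Or.inr (t2 σ h τ hτ))
  · intro σ hσ hnp
    rcases (hmem σ).mp hσ with h | h
    · exact s3 σ h hnp
    · exact t3 σ h hnp
  · intro σ hσ hnp i hi1 hi2
    rcases (hmem σ).mp hσ with h | h
    · obtain ⟨f1, f2⟩ := s4 σ h hnp i hi1 hi2
      exact ⟨f1, fun hD => codesL_mono (fun τ hτ => (hmem τ).mpr (Or.inl hτ)) _ (f2 hD)⟩
    · obtain ⟨f1, f2⟩ := t4 σ h hnp i hi1 hi2
      exact ⟨f1, fun hD => codesL_mono (fun τ hτ => (hmem τ).mpr (Or.inr hτ)) _ (f2 hD)⟩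
  · intro σ hσ hnp hlf
    have hlf' : ∀ U : Tr, σ ∈ U → (∀ τ ∈ U, τ ∈ T ++ T') → isLf U σ := by
      intro U _ hU τ hτ hpre
      exact hlf τ (hU τ hτ) hpre
    rcases (hmem σ).mp hσ with h | h
    · exact s5 σ h hnp (hlf' T h (fun τ hτ => (hmem τ).mpr (Or.inl hτ)))
    · exact t5 σ h hnp (hlf' T' h (fun τ hτ => (hmem τ).mpr (Or.inr hτ)))



-- new material
lemma tval_prefix {τ σ : Str} (h : τ <+: σ) {i : ℕ} (hi : i < τ.length) :
    tval σ i = tval τ i := by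
  unfold tval
  rw [List.getD_eq_getElem _ _ hi, List.getD_eq_getElem _ _ (lt_of_lt_of_le hi h.length_le),
    h.getElem hi]

lemma prefix_length_lt {τ σ : Str} (h : τ <+: σ) (hne : τ ≠ σ) : τ.length < σ.length :=
  lt_of_le_of_ne h.length_le (fun hl => hne (h.eq_of_length hl))

lemma getD_mem {l : List ℕ} {i : ℕ} (h : i < l.length) : l.getD i 0 ∈ l := by
  rw [List.getD_eq_getElem _ _ h]; exact List.getElem_mem h

lemma isLf_anti {U T : Tr} {σ : Str} (hsub : ∀ τ ∈ U, τ ∈ T) (h : isLf T σ) : isLf U σ :=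
  fun τ hτ hpre => h τ (hsub τ hτ) hpre

lemma leg_trans {p q r : Tr} (hnil : ([]:Str) ∈ p)
    (hpq : Leg p q) (hqr : Leg q r)
    (hkill : ∀ ℓ ∈ p, isLf p ℓ → ¬ isLf q ℓ) : Leg p r := by
  obtain ⟨s1, s2, s3, s4, s5⟩ := hpq
  obtain ⟨t1, t2, t3, t4, t5⟩ := hqr
  have hnilq : ([]:Str) ∈ q := s1 _ hnil
  have hsubqr : ∀ x ∈ codesL q, x ∈ codesL r := codesL_mono t1
  -- facts for σ ∈ r \ q
  have key : ∀ σ ∈ r, σ ∉ q →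
      (longP q σ ∈ q ∧ longP q σ ∉ p ∧ isLf q (longP q σ) ∧ longP q σ <+: σ ∧
       longP p σ = longP p (longP q σ) ∧
       (longP p σ).length + (Dl p (longP p σ)).length ≤ (longP q σ).length) := by
    intro σ hσ hσq
    obtain ⟨hm1, hm2, hm3⟩ := longP_spec q σ hnilq
    set m := longP q σ with hmdef
    have hmne : m ≠ σ := fun h => hσq (h ▸ hm1)
    have hmlt : m.length < σ.length := prefix_length_lt hm2 hmne
    -- χ : the next prefix after m
    set χ := σ.take (m.length + 1) with hχdef
    have hχpre : χ <+: σ := List.take_prefix _ _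
    have hχlen : χ.length = m.length + 1 := by
      rw [hχdef, List.length_take]; omega
    have hχr : χ ∈ r := t2 σ hσ χ hχpre
    have hχq : χ ∉ q := by
      intro hc
      have := hm3 χ hc hχpre
      omega
    have hmχ : m <+: χ := List.prefix_of_prefix_length_le hm2 hχpre (by omega)
    have hmLf : isLf q m := (t3 χ hχr hχq).2 m hm1 hmχ (by omega)
    have hmp : m ∉ p := by
      intro hmp
      exact hkill m hmp (isLf_anti s1 hmLf) hmLf
    -- longP p σ = longP p m
    obtain ⟨hl1, hl2, hl3⟩ := longP_spec p σ hnil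
    have hlpm : longP p σ <+: m := by
      refine List.prefix_of_prefix_length_le hl2 hm2 ?_
      exact hm3 _ (s1 _ hl1) hl2
    have heq : longP p m = longP p σ :=
      longP_eq p m (longP p σ) hnil hl1 hlpm
        (fun τ hτ hpre => hl3 τ hτ (hpre.trans hm2))
    have hblock := s5 m hm1 hmp hmLf
    rw [heq] at hblock
    exact ⟨hm1, hmp, hmLf, hm2, heq.symm, hblock⟩
  refine ⟨fun σ hσ => t1 σ (s1 σ hσ), t2, ?_, ?_, ?_⟩
  · -- attach clause
    intro σ hσ hσp
    by_cases hσq : σ ∈ q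
    · exact s3 σ hσq hσp
    · refine ⟨fun h => hσq (h ▸ hnilq), ?_⟩
      intro τ hτ hpre hlen
      have := (t3 σ hσ hσq).2 τ (s1 τ hτ) hpre hlen
      exact isLf_anti s1 this
  · -- entry clause
    intro σ hσ hσp i hi1 hi2
    by_cases hσq : σ ∈ q
    · obtain ⟨f1, f2⟩ := s4 σ hσq hσp i hi1 hi2
      exact ⟨f1, fun h => hsubqr _ (f2 h)⟩
    · obtain ⟨hm1, hmp, hmLf, hm2, heq, hblock⟩ := key σ hσ hσq
      set m := longP q σ
      set ℓ := longP p σ with hℓdef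
      constructor
      · intro hforced
        have him : i < m.length := by omega
        rw [tval_prefix hm2 him]
        have := (s4 m hm1 hmp i (by rw [← heq]; exact hi1) him).1
        rw [← heq] at this
        exact this hforced
      · intro hfree
        by_cases him : i < m.length
        · rw [tval_prefix hm2 him]
          have := (s4 m hm1 hmp i (by rw [← heq]; exact hi1) him).2
          rw [← heq] at this
          exact hsubqr _ (this hfree)
        · -- i ≥ |m| : use q-r legality at σ
          push_neg at him
          obtain ⟨g1, g2⟩ := t4 σ hσ hσq i him hi2
          by_cases hDq : i - (longP q σ).length < (Dl q (longP q σ)).length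
          · rw [g1 hDq]
            refine hsubqr _ ?_
            have : (Dl q (longP q σ)).getD (i - (longP q σ).length) 0 ∈ Dl q (longP q σ) :=
              getD_mem hDq
            simp only [Dl, List.mem_filter] at this
            exact this.1
          · exact g2 (by omega)
  · -- leaf clause
    intro σ hσ hσp hLf
    by_cases hσq : σ ∈ q
    · exact s5 σ hσq hσp (isLf_anti t1 hLf)
    · obtain ⟨hm1, hmp, hmLf, hm2, heq, hblock⟩ := key σ hσ hσq
      exact le_trans hblock hm2.length_le



-- chain extension machinery
def chainN (ℓ : Str) (ent : List ℕ) : Tr :=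
  (List.range ent.length).map (fun j => ℓ ++ ent.take (j+1))

lemma mem_chainN {ℓ : Str} {ent : List ℕ} {σ : Str} :
    σ ∈ chainN ℓ ent ↔ ∃ j, j < ent.length ∧ σ = ℓ ++ ent.take (j+1) := by
  simp [chainN, List.mem_map, eq_comm]

lemma prefix_chain {ℓ : Str} {ent : List ℕ} {τ : Str} {j : ℕ}
    (h : τ <+: ℓ ++ ent.take (j+1)) : τ <+: ℓ ∨ ∃ k, k ≤ j ∧ τ = ℓ ++ ent.take (k+1) := by
  have hτ := List.prefix_iff_eq_take.mp h
  by_cases hn : τ.length ≤ ℓ.length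
  · left
    rw [hτ, List.take_append_of_le_length hn]
    exact List.take_prefix _ _
  · right
    push_neg at hn
    have hlb : τ.length ≤ ℓ.length + (j+1) := by
      have h2 := h.length_le
      rw [List.length_append] at h2
      have := List.length_take_le (j+1) ent
      omega
    rw [List.take_append] at hτ
    have h1 : List.take τ.length ℓ = ℓ := List.take_of_length_le (le_of_lt hn)
    rw [h1, List.take_take, inf_eq_left.mpr (by omega : τ.length - ℓ.length ≤ j+1)] at hτ
    refine ⟨τ.length - ℓ.length - 1, by omega, ?_⟩
    have he : τ.length - ℓ.length - 1 + 1 = τ.length - ℓ.length := by omega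
    rw [he]
    exact hτ

lemma chain_length {ℓ : Str} {ent : List ℕ} {j : ℕ} (hj : j < ent.length) :
    (ℓ ++ ent.take (j+1)).length = ℓ.length + (j+1) := by
  simp [List.length_take]; omega

lemma chain_tval {ℓ : Str} {ent : List ℕ} {j : ℕ} (hj : j < ent.length) {i : ℕ}
    (h1 : ℓ.length ≤ i) (h2 : i < ℓ.length + (j+1)) :
    tval (ℓ ++ ent.take (j+1)) i = (ent.getD (i - ℓ.length) 0).unpair.2 := by
  unfold tval
  rw [List.getD_append_right _ _ _ _ h1]
  congr 2
  have hlt : i - ℓ.length < (ent.take (j+1)).length := by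
    rw [List.length_take]; omega
  have hlt2 : i - ℓ.length < ent.length := by
    have := hlt; rw [List.length_take] at this; omega
  rw [List.getD_eq_getElem _ _ hlt, List.getD_eq_getElem _ _ hlt2, List.getElem_take]

lemma leg_chain {p : Tr} {ℓ : Str} {ent : List ℕ}
    (hPC : PC p) (hnil : ([]:Str) ∈ p) (hℓ : ℓ ∈ p) (hLf : isLf p ℓ)
    (hne : ent ≠ [])
    (hlen : (Dl p ℓ).length ≤ ent.length)
    (hfor : ∀ k, k < (Dl p ℓ).length → (ent.getD k 0).unpair.2 = (Dl p ℓ).getD k 0)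
    (hfree : ∀ k, (Dl p ℓ).length ≤ k → k < ent.length → (ent.getD k 0).unpair.2 = 0) :
    Leg p (p ++ chainN ℓ ent) := by
  have hentpos : 0 < ent.length := List.length_pos_iff.mpr hne
  have hmem : ∀ σ : Str, σ ∈ p ++ chainN ℓ ent ↔ σ ∈ p ∨ σ ∈ chainN ℓ ent := by
    intro σ; simp
  -- chain nodes are not in p
  have hchp : ∀ j, j < ent.length → (ℓ ++ ent.take (j+1)) ∉ p := by
    intro j hj hc
    have := hLf _ hc (List.prefix_append _ _)
    have := congrArg List.length this
    rw [chain_length hj] at this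
    simp at this
  -- p-prefixes of chain nodes are prefixes of ℓ
  have hppre : ∀ j, j < ent.length → ∀ τ ∈ p, τ <+: ℓ ++ ent.take (j+1) → τ <+: ℓ := by
    intro j hj τ hτ hpre
    rcases prefix_chain hpre with h | ⟨k, hk, rfl⟩
    · exact h
    · exact absurd hτ (hchp k (by omega))
  have hlongP : ∀ j, j < ent.length → longP p (ℓ ++ ent.take (j+1)) = ℓ := by
    intro j hj
    exact longP_eq p _ ℓ hnil hℓ (List.prefix_append _ _)
      (fun τ hτ hpre => (hppre j hj τ hτ hpre).length_le)
  refine ⟨fun σ hσ => (hmem σ).mpr (Or.inl hσ), ?_, ?_, ?_, ?_⟩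
  · -- PC
    intro σ hσ τ hτ
    rcases (hmem σ).mp hσ with h | h
    · exact (hmem τ).mpr (Or.inl (hPC σ h τ hτ))
    · obtain ⟨j, hj, rfl⟩ := mem_chainN.mp h
      rcases prefix_chain hτ with h' | ⟨k, hk, rfl⟩
      · exact (hmem τ).mpr (Or.inl (hPC ℓ hℓ τ h'))
      · exact (hmem _).mpr (Or.inr (mem_chainN.mpr ⟨k, by omega, rfl⟩))
  · -- attach
    intro σ hσ hσp
    rcases (hmem σ).mp hσ with h | h
    · exact absurd h hσp
    obtain ⟨j, hj, rfl⟩ := mem_chainN.mp h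
    constructor
    · intro hc
      have := congrArg List.length hc
      rw [chain_length hj] at this
      simp at this
    · intro τ hτ hpre hlen'
      rw [chain_length hj] at hlen'
      have hτℓ : τ <+: ℓ := hppre j hj τ hτ hpre
      have : τ.length ≤ ℓ.length := hτℓ.length_le
      have hj0 : j = 0 := by omega
      have : τ = ℓ := (hτℓ.eq_of_length (by omega))
      rw [this]; exact hLf
  · -- entries
    intro σ hσ hσp i hi1 hi2
    rcases (hmem σ).mp hσ with h | h
    · exact absurd h hσp
    obtain ⟨j, hj, rfl⟩ := mem_chainN.mp h
    rw [hlongP j hj] at hi1 ⊢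
    rw [chain_length hj] at hi2
    rw [chain_tval hj hi1 hi2]
    constructor
    · intro hforced
      exact hfor _ hforced
    · intro hfree'
      rw [hfree _ hfree' (by omega)]
      have hnil' : ([]:Str) ∈ p ++ chainN ℓ ent := (hmem _).mpr (Or.inl hnil)
      exact List.mem_map.mpr ⟨[], hnil', rfl⟩
  · -- leaf bound
    intro σ hσ hσp hLfσ
    rcases (hmem σ).mp hσ with h | h
    · exact absurd h hσp
    obtain ⟨j, hj, rfl⟩ := mem_chainN.mp h
    rw [hlongP j hj, chain_length hj]
    by_cases hjl : j + 1 < ent.length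
    · exfalso
      have hmem2 : ℓ ++ ent.take (j+2) ∈ p ++ chainN ℓ ent :=
        (hmem _).mpr (Or.inr (mem_chainN.mpr ⟨j+1, hjl, rfl⟩))
      have hpre : ℓ ++ ent.take (j+1) <+: ℓ ++ ent.take (j+2) := by
        refine (List.prefix_append_right_inj ℓ).mpr ?_
        rw [show j+1 = min (j+1) (j+2) by omega, ← List.take_take]
        exact List.take_prefix _ _
      have := hLfσ _ hmem2 hpre
      have := congrArg List.length this
      rw [chain_length hj, chain_length (by omega : j+1 < ent.length)] at this
      omega
    · omega



-- membership-invariance of Leg in its second argument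
lemma leg_congr {p T T' : Tr} (h : ∀ σ : Str, σ ∈ T ↔ σ ∈ T') (hL : Leg p T) : Leg p T' := by
  obtain ⟨s1, s2, s3, s4, s5⟩ := hL
  refine ⟨fun σ hσ => (h σ).mp (s1 σ hσ), ?_, ?_, ?_, ?_⟩
  · exact fun σ hσ τ hτ => (h τ).mp (s2 σ ((h σ).mpr hσ) τ hτ)
  · exact fun σ hσ hp => s3 σ ((h σ).mpr hσ) hp
  · intro σ hσ hp i hi1 hi2
    obtain ⟨f1, f2⟩ := s4 σ ((h σ).mpr hσ) hp i hi1 hi2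
    exact ⟨f1, fun hD => codesL_mono (fun τ hτ => (h τ).mp hτ) _ (f2 hD)⟩
  · intro σ hσ hp hLf
    exact s5 σ ((h σ).mpr hσ) hp (isLf_anti (fun τ hτ => (h τ).mp hτ) hLf)

lemma notLf_mono {T T' : Tr} {ℓ : Str} (h : ¬ isLf T ℓ) (hsub : ∀ τ ∈ T, τ ∈ T') :
    ¬ isLf T' ℓ := fun h' => h (isLf_anti hsub h')

-- the canonical block entries over a leaf
def entD (p : Tr) (ℓ : Str) : List ℕ :=
  (if Dl p ℓ = [] then [0] else Dl p ℓ).map (Nat.pair 0)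

lemma entD_ne (p : Tr) (ℓ : Str) : entD p ℓ ≠ [] := by
  unfold entD
  split <;> simp_all

lemma entD_len (p : Tr) (ℓ : Str) : (Dl p ℓ).length ≤ (entD p ℓ).length := by
  unfold entD
  split <;> simp_all

lemma getD_append_lt {l l' : List ℕ} {k : ℕ} (h : k < l.length) :
    (l ++ l').getD k 0 = l.getD k 0 := List.getD_append _ _ _ _ h

lemma entD_for (p : Tr) (ℓ : Str) : ∀ k, k < (Dl p ℓ).length →
    ((entD p ℓ).getD k 0).unpair.2 = (Dl p ℓ).getD k 0 := by
  intro k hk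
  unfold entD
  rw [if_neg (by intro h; rw [h] at hk; simp at hk)]
  have hk2 : k < ((Dl p ℓ).map (Nat.pair 0)).length := by simpa using hk
  rw [List.getD_eq_getElem _ _ hk2, List.getElem_map, Nat.unpair_pair,
    List.getD_eq_getElem _ _ hk]

lemma entD_free (p : Tr) (ℓ : Str) : ∀ k, (Dl p ℓ).length ≤ k → k < (entD p ℓ).length →
    ((entD p ℓ).getD k 0).unpair.2 = 0 := by
  intro k h1 h2
  unfold entD at h2 ⊢
  split at h2
  · rename_i hD
    rw [if_pos hD]
    have hk0 : k = 0 := by simpa using h2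
    subst hk0
    simp
  · rename_i hD
    rw [if_neg hD]
    simp only [List.length_map] at h2
    omega

-- extended entries (diagonal candidate)
lemma entX_for (p : Tr) (ℓ : Str) (x : ℕ) : ∀ k, k < (Dl p ℓ).length →
    (((entD p ℓ) ++ [Nat.pair x 0]).getD k 0).unpair.2 = (Dl p ℓ).getD k 0 := by
  intro k hk
  rw [getD_append_lt (lt_of_lt_of_le hk (entD_len p ℓ))]
  exact entD_for p ℓ k hk

lemma entX_free (p : Tr) (ℓ : Str) (x : ℕ) : ∀ k, (Dl p ℓ).length ≤ k →
    k < ((entD p ℓ) ++ [Nat.pair x 0]).length →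
    (((entD p ℓ) ++ [Nat.pair x 0]).getD k 0).unpair.2 = 0 := by
  intro k h1 h2
  rw [List.length_append, List.length_singleton] at h2
  by_cases hk : k < (entD p ℓ).length
  · rw [getD_append_lt hk]
    exact entD_free p ℓ k h1 hk
  · push_neg at hk
    have : k = (entD p ℓ).length := by omega
    rw [List.getD_append_right _ _ _ _ hk, this]
    simp

noncomputable def ext1 (p : Tr) (ℓ : Str) : Tr := chainN ℓ (entD p ℓ)

open Classical in
noncomputable def extL (p T₁ : Tr) : Tr :=
  T₁ ++ (p.filter (fun ℓ => decide (isLf T₁ ℓ))).flatMap (fun ℓ => ext1 p ℓ)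

lemma leg_ext1 {p : Tr} (hnil : ([]:Str) ∈ p) (hPC : PC p) {ℓ : Str} (hℓ : ℓ ∈ p)
    (hLf : isLf p ℓ) : Leg p (p ++ ext1 p ℓ) :=
  leg_chain hPC hnil hℓ hLf (entD_ne p ℓ) (entD_len p ℓ) (entD_for p ℓ) (entD_free p ℓ)

lemma leg_extL {p T₁ : Tr} (hnil : ([]:Str) ∈ p) (hPC : PC p) (h1 : Leg p T₁) :
    Leg p (extL p T₁) := by
  unfold extL
  have key : ∀ F : Tr, (∀ ℓ ∈ F, ℓ ∈ p ∧ isLf p ℓ) →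
      Leg p (T₁ ++ F.flatMap (fun ℓ => ext1 p ℓ)) := by
    intro F
    induction F with
    | nil => intro _; simpa using h1
    | cons a F ih =>
      intro hF
      have ha := hF a (by simp)
      have hIH := ih (fun ℓ hℓ => hF ℓ (by simp [hℓ]))
      have hu := leg_union hIH (leg_ext1 hnil hPC ha.1 ha.2)
      refine leg_congr (fun σ => ?_) hu
      simp only [List.flatMap_cons, List.mem_append]
      constructor
      · rintro ((h | h) | (h | h))
        · exact Or.inl h
        · exact Or.inr (Or.inr h)
        · exact Or.inl (h1.1 σ h)
        · exact Or.inr (Or.inl h)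
      · rintro (h | h | h)
        · exact Or.inl (Or.inl h)
        · exact Or.inr (Or.inr h)
        · exact Or.inl (Or.inr h)
  refine key _ ?_
  intro ℓ hℓ
  simp only [List.mem_filter, decide_eq_true_eq] at hℓ
  exact ⟨hℓ.1, isLf_anti h1.1 hℓ.2⟩

lemma extL_kill {p T₁ : Tr} (h1 : Leg p T₁) :
    ∀ ℓ ∈ p, isLf p ℓ → ¬ isLf (extL p T₁) ℓ := by
  intro ℓ hℓ hLf hbad
  by_cases hT : isLf T₁ ℓ
  · -- ℓ gets a chain child
    have hmem : ℓ ++ (entD p ℓ).take 1 ∈ extL p T₁ := by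
      unfold extL
      refine List.mem_append_right _ (List.mem_flatMap.mpr ⟨ℓ, ?_, ?_⟩)
      · simp [List.mem_filter, hℓ, hT]
      · exact mem_chainN.mpr ⟨0, List.length_pos_iff.mpr (entD_ne p ℓ), rfl⟩
    have := hbad _ hmem (List.prefix_append _ _)
    have hlen := congrArg List.length this
    have hpos : 0 < (entD p ℓ).length := List.length_pos_iff.mpr (entD_ne p ℓ)
    rw [List.length_append, List.length_take] at hlen
    omega
  · -- ℓ already has an extension in T₁
    unfold isLf at hT
    push_neg at hT
    obtain ⟨τ, hτ, hpre, hne⟩ := hT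
    exact hne (hbad τ (List.mem_append_left _ hτ) hpre)



-- ============ construction ============
open Nat.Partrec (Code)
attribute [local instance] Classical.propDecidable

noncomputable def diagLeaf (p : Tr) : Str :=
  p.foldl (fun b τ => if b.length < τ.length then τ else b) []

lemma dlf_spec (l : List Str) (b : Str) :
    (l.foldl (fun b τ => if b.length < τ.length then τ else b) b = b ∨
      l.foldl (fun b τ => if b.length < τ.length then τ else b) b ∈ l) ∧
    (∀ τ ∈ l, τ.length ≤ (l.foldl (fun b τ => if b.length < τ.length then τ else b) b).length) ∧
    b.length ≤ (l.foldl (fun b τ => if b.length < τ.length then τ else b) b).length := by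
  induction l generalizing b with
  | nil => exact ⟨Or.inl rfl, by simp, le_rfl⟩
  | cons a l ih =>
    rw [List.foldl_cons]
    by_cases h : b.length < a.length
    · rw [if_pos h]
      obtain ⟨i1, i2, i3⟩ := ih a
      refine ⟨?_, ?_, le_trans h.le i3⟩
      · rcases i1 with h' | h'
        · exact Or.inr (by simp [h'])
        · exact Or.inr (List.mem_cons_of_mem _ h')
      · intro τ hτ
        rcases List.mem_cons.mp hτ with rfl | hτ
        · exact i3
        · exact i2 τ hτ
    · rw [if_neg h]
      obtain ⟨i1, i2, i3⟩ := ih b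
      refine ⟨?_, ?_, i3⟩
      · rcases i1 with h' | h'
        · exact Or.inl h'
        · exact Or.inr (List.mem_cons_of_mem _ h')
      · intro τ hτ
        rcases List.mem_cons.mp hτ with rfl | hτ
        · push_neg at h; exact le_trans h i3
        · exact i2 τ hτ

lemma diagLeaf_spec (p : Tr) (hnil : ([]:Str) ∈ p) :
    diagLeaf p ∈ p ∧ isLf p (diagLeaf p) := by
  obtain ⟨i1, i2, _⟩ := dlf_spec p []
  have hm : diagLeaf p ∈ p := by
    rcases i1 with h | h
    · unfold diagLeaf; rw [h]; exact hnil
    · exact h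
  refine ⟨hm, ?_⟩
  intro τ hτ hpre
  have h1 : τ.length ≤ (diagLeaf p).length := i2 τ hτ
  have h2 : (diagLeaf p).length ≤ τ.length := hpre.length_le
  exact (hpre.eq_of_length (le_antisymm h2 h1)).symm

noncomputable def diagTip (p : Tr) : Str := diagLeaf p ++ entD p (diagLeaf p)
noncomputable def diagCand (p : Tr) (j : ℕ) : Str := diagTip p ++ [Nat.pair j 0]

noncomputable def adoptD (c : Code) (p : Tr) : Tr :=
  if h : ∃ j, ¬(c.eval (Encodable.encode (diagCand p j))).Dom
  then chainN (diagLeaf p) (entD p (diagLeaf p) ++ [Nat.pair h.choose 0])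
  else []

def BadPair (c : Code) (p L : Tr) : Prop :=
  Leg p L ∧ ∃ n y y' u u' k k' : ℕ, y ≠ y' ∧
    (Nat.Partrec.Code.evaln k c (Nat.pair (Nat.pair n y) u)).isSome ∧
    (Nat.Partrec.Code.evaln k' c (Nat.pair (Nat.pair n y') u')).isSome ∧
    (∀ w ∈ Denumerable.ofNat (List ℕ) u, w ∈ codesL L) ∧
    (∀ w ∈ Denumerable.ofNat (List ℕ) u', w ∈ codesL L)

noncomputable def adoptO (c : Code) (p : Tr) : Tr :=
  if h : ∃ L, BadPair c p L then h.choose else []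

noncomputable def adopt (s : ℕ) (p : Tr) : Tr :=
  if Nat.bodd s then adoptO (Denumerable.ofNat Code s.div2) p
  else adoptD (Denumerable.ofNat Code s.div2) p

noncomputable def stepT (s : ℕ) (p : Tr) : Tr := extL p (p ++ adopt s p)

noncomputable def Ts : ℕ → Tr
  | 0 => [[]]
  | s+1 => stepT s (Ts s)

def Atree : Set Str := {σ | ∃ s, σ ∈ Ts s}

lemma leg_adopt {p : Tr} (hnil : ([]:Str) ∈ p) (hPC : PC p) (s : ℕ) :
    Leg p (p ++ adopt s p) := by
  unfold adopt
  split
  · -- operator requirement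
    unfold adoptO
    split
    · rename_i h
      have hB := h.choose_spec
      refine leg_congr (fun σ => ?_) hB.1
      simp only [List.mem_append]
      exact ⟨fun hh => Or.inr hh, fun hh => hh.elim (fun hp => hB.1.1 σ hp) id⟩
    · rw [List.append_nil]; exact leg_refl hPC
  · -- diagonal requirement
    unfold adoptD
    split
    · rename_i h
      obtain ⟨hm, hLf⟩ := diagLeaf_spec p hnil
      refine leg_chain hPC hnil hm hLf (by simp) ?_ (entX_for p _ _) (entX_free p _ _)
      calc (Dl p (diagLeaf p)).length ≤ (entD p (diagLeaf p)).length := entD_len p _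
        _ ≤ _ := by simp
    · rw [List.append_nil]; exact leg_refl hPC

lemma Ts_good : ∀ s, ([] : Str) ∈ Ts s ∧ PC (Ts s) := by
  intro s
  induction s with
  | zero =>
    constructor
    · simp [Ts]
    · intro σ hσ τ hτ
      simp only [Ts, List.mem_singleton] at hσ
      subst hσ
      simp only [List.prefix_nil] at hτ
      simp [Ts, hτ]
  | succ s ih =>
    have hleg : Leg (Ts s) (Ts (s+1)) :=
      leg_extL ih.1 ih.2 (leg_adopt ih.1 ih.2 s)
    exact ⟨hleg.1 _ ih.1, hleg.2.1⟩

lemma Ts_step (s : ℕ) : Leg (Ts s) (Ts (s+1)) :=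
  leg_extL (Ts_good s).1 (Ts_good s).2 (leg_adopt (Ts_good s).1 (Ts_good s).2 s)

lemma Ts_kill1 (s : ℕ) : ∀ ℓ ∈ Ts s, isLf (Ts s) ℓ → ¬ isLf (Ts (s+1)) ℓ := by
  have := extL_kill (leg_adopt (Ts_good s).1 (Ts_good s).2 s)
  exact fun ℓ hℓ hLf => this ℓ hℓ hLf

lemma Ts_mono {s t : ℕ} (h : s ≤ t) : ∀ σ ∈ Ts s, σ ∈ Ts t := by
  induction t with
  | zero => intro σ hσ; rwa [Nat.le_zero.mp h] at hσ
  | succ t ih =>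
    rcases Nat.le_succ_iff.mp h with h' | h'
    · exact fun σ hσ => (Ts_step t).1 σ (ih h' σ hσ)
    · subst h'; exact fun σ hσ => hσ

lemma Ts_kill {s t : ℕ} (h : s < t) : ∀ ℓ ∈ Ts s, isLf (Ts s) ℓ → ¬ isLf (Ts t) ℓ := by
  intro ℓ hℓ hLf
  exact notLf_mono (Ts_kill1 s ℓ hℓ hLf) (Ts_mono h)

lemma Ts_leg {s t : ℕ} (h : s ≤ t) : Leg (Ts s) (Ts t) := by
  induction t with
  | zero => rw [Nat.le_zero.mp h]; exact leg_refl (Ts_good 0).2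
  | succ t ih =>
    rcases Nat.le_succ_iff.mp h with h' | h'
    · rcases Nat.lt_or_ge s t with h'' | h''
      · exact leg_trans (Ts_good s).1 (ih h') (Ts_step t) (Ts_kill h'')
      · have : s = t := le_antisymm h' h''
        subst this
        exact Ts_step s
    · subst h'; exact leg_refl (Ts_good _).2



-- ====== final tree properties ======

lemma Atree_PC {σ τ : Str} (h : σ ∈ Atree) (hpre : τ <+: σ) : τ ∈ Atree := by
  obtain ⟨s, hs⟩ := h
  exact ⟨s, (Ts_good s).2 σ hs τ hpre⟩

lemma Atree_notLf {σ : Str} (h : σ ∈ Atree) :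
    ∃ τ ∈ Atree, σ <+: τ ∧ τ ≠ σ := by
  obtain ⟨s, hs⟩ := h
  by_cases hLf : isLf (Ts s) σ
  · have := Ts_kill1 s σ hs hLf
    unfold isLf at this
    push_neg at this
    obtain ⟨τ, h1, h2, h3⟩ := this
    exact ⟨τ, ⟨s+1, h1⟩, h2, h3⟩
  · unfold isLf at hLf
    push_neg at hLf
    obtain ⟨τ, h1, h2, h3⟩ := hLf
    exact ⟨τ, ⟨s, h1⟩, h2, h3⟩

/-- every node is "sealed" one stage after it appears: children only in `Ts (s+1)` -/
lemma Atree_children {σ : Str} {s : ℕ} (hs : σ ∈ Ts s) {x : ℕ}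
    (h : σ ++ [x] ∈ Atree) : σ ++ [x] ∈ Ts (s+1) := by
  have hnl : ¬ isLf (Ts (s+1)) σ := by
    by_cases hLf : isLf (Ts s) σ
    · exact Ts_kill1 s σ hs hLf
    · exact notLf_mono hLf (Ts_mono (Nat.le_succ s))
  obtain ⟨t, ht⟩ := h
  have ht' : σ ++ [x] ∈ Ts (max t (s+1)) := Ts_mono (le_max_left _ _) _ ht
  by_contra hmem
  have hnot : σ ++ [x] ∉ Ts (s+1) := hmem
  have hleg := Ts_leg (le_max_right t (s+1))
  have := (hleg.2.2.1 _ ht' hnot).2 σ ((Ts_mono (Nat.le_succ s)) σ hs)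
    (List.prefix_append _ _) (by simp)
  exact hnl this

lemma Atree_finBranch (σ : Str) : {x : ℕ | σ ++ [x] ∈ Atree}.Finite := by
  by_cases h : ∃ s, σ ∈ Ts s
  · obtain ⟨s, hs⟩ := h
    have hsub : {x : ℕ | σ ++ [x] ∈ Atree} ⊆
        {x : ℕ | x ∈ (Ts (s+1)).map (fun τ => τ.getD σ.length 0)} := by
      intro x hx
      have := Atree_children hs hx
      simp only [Set.mem_setOf_eq, List.mem_map]
      refine ⟨σ ++ [x], this, ?_⟩
      rw [List.getD_append_right _ _ _ _ (le_refl _)]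
      simp
    exact Set.Finite.subset (List.finite_toSet _) hsub
  · have : {x : ℕ | σ ++ [x] ∈ Atree} = ∅ := by
      ext x
      simp only [Set.mem_setOf_eq, Set.mem_empty_iff_false, iff_false]
      intro hx
      obtain ⟨t, ht⟩ := hx
      exact h ⟨t, (Ts_good t).2 _ ht σ (List.prefix_append _ _)⟩
    rw [this]; exact Set.finite_empty

-- entries of tree nodes are codes of tree nodes
lemma entries_in : ∀ s, ∀ σ ∈ Ts s, ∀ i, i < σ.length → tval σ i ∈ codesL (Ts s) := by
  intro s
  induction s with
  | zero =>
    intro σ hσ i hi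
    have : σ = [] := by simpa [Ts] using hσ
    subst this
    simp at hi
  | succ s ih =>
    intro σ hσ i hi
    by_cases hmem : σ ∈ Ts s
    · exact codesL_mono (Ts_mono (Nat.le_succ s)) _ (ih σ hmem i hi)
    · have hleg := Ts_leg (Nat.le_succ s)
      obtain ⟨hl1, hl2, _⟩ := longP_spec (Ts s) σ (Ts_good s).1
      by_cases hiℓ : i < (longP (Ts s) σ).length
      · rw [tval_prefix hl2 hiℓ]
        exact codesL_mono (Ts_mono (Nat.le_succ s)) _ (ih _ hl1 i hiℓ)
      · push_neg at hiℓ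
        obtain ⟨f1, f2⟩ := hleg.2.2.2.1 σ hσ hmem i hiℓ hi
        by_cases hD : i - (longP (Ts s) σ).length < (Dl (Ts s) (longP (Ts s) σ)).length
        · rw [f1 hD]
          have hmm : (Dl (Ts s) (longP (Ts s) σ)).getD (i - (longP (Ts s) σ).length) 0
              ∈ Dl (Ts s) (longP (Ts s) σ) := by
            rw [List.getD_eq_getElem _ _ hD]
            exact List.getElem_mem hD
          exact codesL_mono (Ts_mono (Nat.le_succ s)) _ (mem_Dl.mp hmm).1
        · exact f2 (by omega)

def vseg (v : ℕ → ℕ) (n : ℕ) : Str := (List.range n).map v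

lemma vseg_len (v : ℕ → ℕ) (n : ℕ) : (vseg v n).length = n := by simp [vseg]

lemma vseg_take (v : ℕ → ℕ) {m n : ℕ} (h : m ≤ n) :
    List.take m (vseg v n) = vseg v m := by
  unfold vseg
  rw [← List.map_take, List.take_range, min_eq_left h]

lemma vseg_prefix (v : ℕ → ℕ) {m n : ℕ} (h : m ≤ n) : vseg v m <+: vseg v n := by
  rw [← vseg_take v h]
  exact List.take_prefix _ _

lemma vseg_tval (v : ℕ → ℕ) {i n : ℕ} (h : i < n) : tval (vseg v n) i = (v i).unpair.2 := by
  unfold tval vseg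
  have hi : i < ((List.range n).map v).length := by simpa using h
  rw [List.getD_eq_getElem _ _ hi]
  simp

lemma prefix_vseg {v : ℕ → ℕ} {n : ℕ} {τ : Str} (h : τ <+: vseg v n) : τ = vseg v τ.length := by
  have h2 := List.prefix_iff_eq_take.mp h
  have hlen : τ.length ≤ n := by
    have := h.length_le; rwa [vseg_len] at this
  conv_lhs => rw [h2, vseg_take v hlen]


attribute [local instance] Classical.propDecidable

lemma le_foldr_max {x : ℕ} {l : List ℕ} (h : x ∈ l) : x ≤ l.foldr max 0 := by
  induction l with
  | nil => simp at h
  | cons a l ih =>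
    rcases List.mem_cons.mp h with rfl | h
    · exact le_max_left _ _
    · exact le_trans (ih h) (le_max_right _ _)

lemma covering (v : ℕ → ℕ) (hv : ∀ n, vseg v n ∈ Atree) (s : ℕ) {ρ : Str} (hρ : ρ ∈ Ts s) :
    ∃ n, (v n).unpair.2 = Encodable.encode ρ := by
  classical
  set P : ℕ → Prop := fun j => vseg v j ∈ Ts s with hP
  set B : ℕ := ((Ts s).map List.length).foldr max 0 + 1 with hB
  have hPB : ∀ j, P j → j ≤ B - 1 := by
    intro j hj
    have : (vseg v j).length ∈ (Ts s).map List.length := List.mem_map.mpr ⟨_, hj, rfl⟩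
    have := le_foldr_max this
    rw [vseg_len] at this
    omega
  set k : ℕ := Nat.findGreatest P B with hk
  have hP0 : P 0 := by
    show vseg v 0 ∈ Ts s
    have : vseg v 0 = ([] : Str) := by simp [vseg]
    rw [this]; exact (Ts_good s).1
  have hPk : P k := Nat.findGreatest_spec (Nat.zero_le B) hP0
  have hnPk : ∀ j, k < j → ¬ P j := by
    intro j hj hcon
    rcases Nat.lt_or_ge B j with h' | h'
    · have := hPB j hcon; omega
    · exact Nat.findGreatest_is_greatest hj h' hcon
  set ℓ : Str := vseg v k with hℓ
  -- leafness of ℓ in Ts s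
  obtain ⟨t1, ht1⟩ := hv (k+1)
  obtain ⟨hseg1, hts⟩ : vseg v (k+1) ∈ Ts (max t1 s) ∧ s ≤ max t1 s :=
    ⟨Ts_mono (le_max_left _ _) _ ht1, le_max_right _ _⟩
  have hnot1 : vseg v (k+1) ∉ Ts s := hnPk (k+1) (Nat.lt_succ_self k)
  have hLf : isLf (Ts s) ℓ := by
    refine ((Ts_leg hts).2.2.1 _ hseg1 hnot1).2 ℓ hPk (vseg_prefix v (Nat.le_succ k)) ?_
    rw [vseg_len, vseg_len]
  have hx : Encodable.encode ρ ∈ codesL (Ts s) := List.mem_map.mpr ⟨ρ, hρ, rfl⟩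
  by_cases htr : Encodable.encode ρ ∈ trace ℓ
  · -- already mentioned within ℓ
    unfold trace at htr
    obtain ⟨e, he1, he2⟩ := List.mem_map.mp htr
    unfold ℓ at he1
    unfold vseg at he1
    obtain ⟨i, _, rfl⟩ := List.mem_map.mp he1
    exact ⟨i, he2⟩
  · -- appears in the backlog block
    have hmm : Encodable.encode ρ ∈ Dl (Ts s) ℓ := mem_Dl.mpr ⟨hx, htr⟩
    obtain ⟨d, hd, hdx⟩ := List.mem_iff_getElem.mp hmm
    obtain ⟨tb', htb'⟩ := hv (k+d+1)
    have hsegb : vseg v (k+d+1) ∈ Ts (max tb' s) := Ts_mono (le_max_left _ _) _ htb'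
    have htsb : s ≤ max tb' s := le_max_right _ _
    have hnotb : vseg v (k+d+1) ∉ Ts s := hnPk _ (by omega)
    have hlong : longP (Ts s) (vseg v (k+d+1)) = ℓ := by
      refine longP_eq _ _ _ (Ts_good s).1 hPk (vseg_prefix v (by omega)) ?_
      intro τ hτ hpre
      have hτv := prefix_vseg hpre
      have : P τ.length := by
        show vseg v τ.length ∈ Ts s
        rw [← hτv]; exact hτ
      have : τ.length ≤ k := by
        by_contra hcon
        push_neg at hcon
        exact hnPk _ hcon this
      rw [vseg_len]; exact this
    have hleg := Ts_leg htsb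
    have hfr := (hleg.2.2.2.1 _ hsegb hnotb (k+d)
      (by rw [hlong, vseg_len]; omega) (by rw [vseg_len]; omega)).1
    rw [hlong] at hfr
    rw [vseg_len] at hfr
    have hfr2 := hfr (by omega : k + d - k < (Dl (Ts s) ℓ).length)
    rw [vseg_tval v (by omega : k+d < k+d+1)] at hfr2
    refine ⟨k+d, ?_⟩
    rw [hfr2]
    rw [show k + d - k = d by omega]
    rw [List.getD_eq_getElem _ _ (by omega : d < (Dl (Ts s) ℓ).length)]
    exact hdx



-- ===== Bool layer =====
def allB {α : Type} (l : List α) (f : α → Bool) : Bool := l.foldr (fun a s => f a && s) true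
def anyB {α : Type} (l : List α) (f : α → Bool) : Bool := l.foldr (fun a s => f a || s) false

lemma allB_iff {α : Type} {l : List α} {f : α → Bool} :
    allB l f = true ↔ ∀ x ∈ l, f x = true := by
  induction l with
  | nil => simp [allB]
  | cons a l ih =>
    have hh : allB (a::l) f = (f a && allB l f) := rfl
    rw [hh, Bool.and_eq_true, ih]
    constructor
    · rintro ⟨h1, h2⟩ x hx
      rcases List.mem_cons.mp hx with rfl | hx
      · exact h1
      · exact h2 x hx
    · intro h
      exact ⟨h a (by simp), fun x hx => h x (by simp [hx])⟩

lemma anyB_iff {α : Type} {l : List α} {f : α → Bool} :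
    anyB l f = true ↔ ∃ x ∈ l, f x = true := by
  induction l with
  | nil => simp [anyB]
  | cons a l ih =>
    have hh : anyB (a::l) f = (f a || anyB l f) := rfl
    rw [hh, Bool.or_eq_true, ih]
    constructor
    · rintro (h | ⟨x, hx, hfx⟩)
      · exact ⟨a, by simp, h⟩
      · exact ⟨x, by simp [hx], hfx⟩
    · rintro ⟨x, hx, hfx⟩
      rcases List.mem_cons.mp hx with rfl | hx
      · exact Or.inl hfx
      · exact Or.inr ⟨x, hx, hfx⟩

def memB {α : Type} [DecidableEq α] (l : List α) (x : α) : Bool :=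
  anyB l (fun y => decide (y = x))

lemma memB_iff {α : Type} [DecidableEq α] {l : List α} {x : α} :
    memB l x = true ↔ x ∈ l := by
  simp only [memB, anyB_iff, decide_eq_true_eq]
  constructor
  · rintro ⟨y, hy, rfl⟩; exact hy
  · intro h; exact ⟨x, h, rfl⟩

def prefB (τ σ : Str) : Bool :=
  decide (τ.length ≤ σ.length) &&
    allB (List.range τ.length) (fun i => decide (τ.getD i 0 = σ.getD i 0))

lemma prefB_iff {τ σ : Str} : prefB τ σ = true ↔ τ <+: σ := by
  unfold prefB
  rw [Bool.and_eq_true, decide_eq_true_eq, allB_iff]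
  constructor
  · rintro ⟨h1, h2⟩
    rw [List.prefix_iff_eq_take]
    refine List.ext_getElem (by simp [List.length_take]; omega) ?_
    intro n hn1 hn2
    have hx := h2 n (List.mem_range.mpr hn1)
    rw [decide_eq_true_eq] at hx
    rw [List.getD_eq_getElem _ _ hn1, List.getD_eq_getElem _ _ (by omega : n < σ.length)] at hx
    rw [List.getElem_take]
    exact hx
  · intro h
    refine ⟨h.length_le, ?_⟩
    intro i hi
    rw [List.mem_range] at hi
    rw [decide_eq_true_eq, List.getD_eq_getElem _ _ hi,
      List.getD_eq_getElem _ _ (lt_of_lt_of_le hi h.length_le)]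
    exact h.getElem hi

def leafB (T : Tr) (σ : Str) : Bool := allB T (fun τ => !(prefB σ τ) || decide (τ = σ))

lemma leafB_iff {T : Tr} {σ : Str} : leafB T σ = true ↔ isLf T σ := by
  unfold leafB isLf
  rw [allB_iff]
  apply forall_congr'
  intro τ
  constructor
  · intro h hτ hpre
    have := h hτ
    rw [Bool.or_eq_true, Bool.not_eq_true', decide_eq_true_eq] at this
    rcases this with h' | h'
    · rw [← prefB_iff] at hpre; simp [hpre] at h'
    · exact h'
  · intro h hτ
    rw [Bool.or_eq_true, Bool.not_eq_true', decide_eq_true_eq]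
    by_cases hp : σ <+: τ
    · exact Or.inr (h hτ hp)
    · exact Or.inl (by rw [← Bool.not_eq_true, prefB_iff]; exact hp)

def legB (p T : Tr) : Bool :=
  allB p (fun σ => memB T σ) &&
  (allB T (fun σ => decide (σ = ([]:Str)) ||
      anyB T (fun τ => prefB τ σ && decide (τ.length + 1 = σ.length))) &&
   allB T (fun σ => memB p σ ||
    (!(decide (σ = ([]:Str))) &&
     (allB p (fun τ => !(prefB τ σ && decide (τ.length + 1 = σ.length)) || leafB p τ) &&
      (allB (List.range σ.length) (fun i =>
        decide (i < (longP p σ).length) ||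
        (bif decide (i - (longP p σ).length < (Dl p (longP p σ)).length)
         then decide (tval σ i = (Dl p (longP p σ)).getD (i - (longP p σ).length) 0)
         else memB (codesL T) (tval σ i))) &&
       (!(leafB T σ) || decide ((longP p σ).length + (Dl p (longP p σ)).length ≤ σ.length)))))))

lemma parent_PC {T : Tr} (hnil : ([]:Str) ∈ T)
    (hpar : ∀ σ ∈ T, σ ≠ [] → ∃ τ ∈ T, τ <+: σ ∧ τ.length + 1 = σ.length) : PC T := by
  have key : ∀ d (σ : Str), σ ∈ T → ∀ τ : Str, τ <+: σ → σ.length - τ.length = d → τ ∈ T := by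
    intro d
    induction d with
    | zero =>
      intro σ hσ τ hpre hd
      have h1 := hpre.length_le
      have : τ = σ := hpre.eq_of_length (by omega)
      rwa [this]
    | succ d ih =>
      intro σ hσ τ hpre hd
      have hne : σ ≠ [] := by
        intro h; subst h; simp at hd
      obtain ⟨ρ, hρT, hρpre, hρlen⟩ := hpar σ hσ hne
      have h1 := hpre.length_le
      have hτρ : τ <+: ρ := List.prefix_of_prefix_length_le hpre hρpre (by omega)
      exact ih ρ hρT τ hτρ (by omega)
  intro σ hσ τ hpre
  exact key _ σ hσ τ hpre rfl

lemma legB_iff {p T : Tr} (hnil : ([]:Str) ∈ p) : legB p T = true ↔ Leg p T := by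
  unfold legB Leg
  rw [Bool.and_eq_true, Bool.and_eq_true, allB_iff, allB_iff, allB_iff]
  constructor
  · rintro ⟨h1, h2, h3⟩
    have hsub : ∀ σ ∈ p, σ ∈ T := fun σ hσ => memB_iff.mp (h1 σ hσ)
    have hPC : PC T := by
      refine parent_PC (hsub _ hnil) ?_
      intro σ hσ hne
      have := h2 σ hσ
      rw [Bool.or_eq_true, decide_eq_true_eq] at this
      rcases this with h' | h'
      · exact absurd h' hne
      · rw [anyB_iff] at h'
        obtain ⟨τ, hτ, hh⟩ := h'
        rw [Bool.and_eq_true, prefB_iff, decide_eq_true_eq] at hh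
        exact ⟨τ, hτ, hh⟩
    refine ⟨hsub, hPC, ?_, ?_, ?_⟩ <;> intro σ hσ hσp
    · have := h3 σ hσ
      rw [Bool.or_eq_true] at this
      rcases this with h' | h'
      · exact absurd (memB_iff.mp h') hσp
      rw [Bool.and_eq_true, Bool.and_eq_true, Bool.not_eq_true', decide_eq_false_iff_not] at h'
      refine ⟨h'.1, ?_⟩
      intro τ hτ hpre hlen
      have := allB_iff.mp h'.2.1 τ hτ
      rw [Bool.or_eq_true, Bool.not_eq_true'] at this
      rcases this with h'' | h''
      · exfalso
        rw [Bool.and_eq_false_iff] at h''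
        rcases h'' with h'' | h''
        · rw [← prefB_iff] at hpre; simp [hpre] at h''
        · simp [hlen] at h''
      · exact leafB_iff.mp h''
    · have := h3 σ hσ
      rw [Bool.or_eq_true] at this
      rcases this with h' | h'
      · exact absurd (memB_iff.mp h') hσp
      rw [Bool.and_eq_true, Bool.and_eq_true, Bool.and_eq_true] at h'
      intro i hi1 hi2
      have := allB_iff.mp h'.2.2.1 i (List.mem_range.mpr hi2)
      rw [Bool.or_eq_true, decide_eq_true_eq] at this
      rcases this with h'' | h''
      · omega
      constructor
      · intro hD
        rw [show (decide (i - (longP p σ).length < (Dl p (longP p σ)).length)) = true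
            from decide_eq_true_eq.mpr hD, cond_true, decide_eq_true_eq] at h''
        exact h''
      · intro hD
        rw [show (decide (i - (longP p σ).length < (Dl p (longP p σ)).length)) = false
            from by simp; omega, cond_false, memB_iff] at h''
        exact h''
    · have := h3 σ hσ
      rw [Bool.or_eq_true] at this
      rcases this with h' | h'
      · exact absurd (memB_iff.mp h') hσp
      rw [Bool.and_eq_true, Bool.and_eq_true, Bool.and_eq_true] at h'
      intro hLf
      have := h'.2.2.2
      rw [Bool.or_eq_true, Bool.not_eq_true', decide_eq_true_eq] at this
      rcases this with h'' | h''
      · simp [leafB_iff.mpr hLf] at h''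
      · exact h''
  · rintro ⟨s1, s2, s3, s4, s5⟩
    refine ⟨fun σ hσ => memB_iff.mpr (s1 σ hσ), ?_, ?_⟩
    · intro σ hσ
      rw [Bool.or_eq_true, decide_eq_true_eq]
      by_cases hne : σ = []
      · exact Or.inl hne
      · right
        rw [anyB_iff]
        refine ⟨σ.dropLast, s2 σ hσ _ (List.dropLast_prefix σ), ?_⟩
        rw [Bool.and_eq_true, prefB_iff, decide_eq_true_eq]
        refine ⟨List.dropLast_prefix σ, ?_⟩
        rw [List.length_dropLast]
        have : σ.length ≠ 0 := fun h => hne (List.eq_nil_of_length_eq_zero h)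
        omega
    · intro σ hσ
      rw [Bool.or_eq_true]
      by_cases hσp : σ ∈ p
      · exact Or.inl (memB_iff.mpr hσp)
      right
      rw [Bool.and_eq_true, Bool.and_eq_true, Bool.and_eq_true, Bool.not_eq_true',
        decide_eq_false_iff_not]
      obtain ⟨c1, c2⟩ := s3 σ hσ hσp
      refine ⟨c1, ?_, ?_, ?_⟩
      · rw [allB_iff]
        intro τ hτ
        rw [Bool.or_eq_true, Bool.not_eq_true']
        by_cases hc : τ <+: σ ∧ τ.length + 1 = σ.length
        · exact Or.inr (leafB_iff.mpr (c2 τ hτ hc.1 hc.2))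
        · left
          rw [Bool.and_eq_false_iff]
          rcases not_and_or.mp hc with h | h
          · exact Or.inl (by rw [← Bool.not_eq_true, prefB_iff]; exact h)
          · exact Or.inr (by simpa using h)
      · rw [allB_iff]
        intro i hi
        rw [List.mem_range] at hi
        rw [Bool.or_eq_true, decide_eq_true_eq]
        by_cases hiℓ : i < (longP p σ).length
        · exact Or.inl hiℓ
        right
        push_neg at hiℓ
        obtain ⟨f1, f2⟩ := s4 σ hσ hσp i hiℓ hi
        by_cases hD : i - (longP p σ).length < (Dl p (longP p σ)).length
        · rw [show (decide (i - (longP p σ).length < (Dl p (longP p σ)).length)) = true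
            from decide_eq_true_eq.mpr hD, cond_true, decide_eq_true_eq]
          exact f1 hD
        · rw [show (decide (i - (longP p σ).length < (Dl p (longP p σ)).length)) = false
            from by simpa using hD, cond_false, memB_iff]
          exact f2 (by omega)
      · rw [Bool.or_eq_true, Bool.not_eq_true', decide_eq_true_eq]
        by_cases hLf : isLf T σ
        · exact Or.inr (s5 σ hσ hσp hLf)
        · exact Or.inl (by rw [← Bool.not_eq_true, leafB_iff]; exact hLf)



-- ===== Primrec layer =====
section PR
open Primrec
variable {α β : Type} [Primcodable α] [Primcodable β]

lemma pr_band {f g : α → Bool} (hf : Primrec f) (hg : Primrec g) :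
    Primrec fun a => f a && g a :=
  (Primrec.cond hf hg (Primrec.const false)).of_eq (fun a => by cases h : f a <;> simp [h])

lemma pr_bor {f g : α → Bool} (hf : Primrec f) (hg : Primrec g) :
    Primrec fun a => f a || g a :=
  (Primrec.cond hf (Primrec.const true) hg).of_eq (fun a => by cases h : f a <;> simp [h])

lemma pr_bnot {f : α → Bool} (hf : Primrec f) : Primrec fun a => !(f a) :=
  (Primrec.cond hf (Primrec.const false) (Primrec.const true)).of_eq
    (fun a => by cases h : f a <;> simp [h])

lemma pr_allB {f : α → List β} {g : α → β → Bool} (hf : Primrec f) (hg : Primrec₂ g) :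
    Primrec fun a => allB (f a) (g a) := by
  have hh : Primrec₂ (fun a (p : β × Bool) => g a p.1 && p.2) :=
    pr_band (hg.comp Primrec.fst (Primrec.fst.comp Primrec.snd))
      (Primrec.snd.comp Primrec.snd)
  exact (Primrec.list_foldr hf (Primrec.const true) hh).of_eq (fun a => rfl)

lemma pr_anyB {f : α → List β} {g : α → β → Bool} (hf : Primrec f) (hg : Primrec₂ g) :
    Primrec fun a => anyB (f a) (g a) := by
  have hh : Primrec₂ (fun a (p : β × Bool) => g a p.1 || p.2) :=
    pr_bor (hg.comp Primrec.fst (Primrec.fst.comp Primrec.snd))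
      (Primrec.snd.comp Primrec.snd)
  exact (Primrec.list_foldr hf (Primrec.const false) hh).of_eq (fun a => rfl)

lemma pr_memB [DecidableEq β] {f : α → List β} {g : α → β} (hf : Primrec f) (hg : Primrec g) :
    Primrec fun a => memB (f a) (g a) :=
  pr_anyB hf (Primrec.eq.comp Primrec.snd (hg.comp Primrec.fst)).decide

lemma pr_prefB : Primrec₂ prefB := by
  have h1 : Primrec fun x : Str × Str => decide (x.1.length ≤ x.2.length) :=
    (Primrec.nat_le.comp (list_length.comp Primrec.fst) (list_length.comp Primrec.snd)).decide
  have h2 : Primrec fun x : Str × Str =>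
      allB (List.range x.1.length) (fun i => decide (x.1.getD i 0 = x.2.getD i 0)) := by
    refine pr_allB (list_range.comp (list_length.comp Primrec.fst)) ?_
    exact (Primrec.eq.comp ((list_getD 0).comp (Primrec.fst.comp Primrec.fst) Primrec.snd)
      ((list_getD 0).comp (Primrec.snd.comp Primrec.fst) Primrec.snd)).decide
  exact (pr_band h1 h2).to₂

lemma pr_tval : Primrec₂ tval :=
  (Primrec.snd.comp (Primrec.unpair.comp ((list_getD 0).comp Primrec.fst Primrec.snd))).to₂

lemma pr_trace : Primrec trace :=
  list_map Primrec.id ((Primrec.snd.comp (Primrec.unpair.comp Primrec.snd)).to₂)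

lemma pr_codesL : Primrec codesL :=
  list_map Primrec.id ((Primrec.encode.comp Primrec.snd).to₂)

def filterB {γ : Type} (l : List γ) (f : γ → Bool) : List γ :=
  l.foldr (fun a s => bif f a then a :: s else s) []

lemma filterB_eq {γ : Type} (l : List γ) (f : γ → Bool) : filterB l f = l.filter f := by
  induction l with
  | nil => rfl
  | cons a l ih =>
    have : filterB (a::l) f = bif f a then a :: filterB l f else filterB l f := rfl
    rw [this, ih, List.filter_cons]
    cases h : f a <;> simp [h]

lemma pr_filterB {f : α → List β} {g : α → β → Bool} (hf : Primrec f) (hg : Primrec₂ g) :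
    Primrec fun a => filterB (f a) (g a) := by
  have hh : Primrec₂ (fun a (p : β × List β) => bif g a p.1 then p.1 :: p.2 else p.2) := by
    refine Primrec.cond (hg.comp Primrec.fst (Primrec.fst.comp Primrec.snd)) ?_ ?_
    · exact (list_cons.comp (Primrec.fst.comp Primrec.snd) (Primrec.snd.comp Primrec.snd))
    · exact Primrec.snd.comp Primrec.snd
  exact (Primrec.list_foldr hf (Primrec.const []) hh).of_eq (fun a => rfl)

lemma Dl_eq (p : Tr) (ℓ : Str) : Dl p ℓ = filterB (codesL p) (fun x => !(memB (trace ℓ) x)) := by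
  rw [filterB_eq]
  unfold Dl
  refine List.filter_congr ?_
  intro x _
  by_cases h : x ∈ trace ℓ
  · simp [h, memB_iff.mpr h]
  · have hf : memB (trace ℓ) x = false := by
      rw [← Bool.not_eq_true, memB_iff]; exact h
    simp [h, hf]

lemma pr_Dl : Primrec₂ Dl := by
  have : Primrec fun x : Tr × Str => filterB (codesL x.1) (fun w => !(memB (trace x.2) w)) := by
    refine pr_filterB (pr_codesL.comp Primrec.fst) ?_
    exact (pr_bnot (pr_memB (pr_trace.comp (Primrec.snd.comp Primrec.fst)) Primrec.snd)).to₂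
  exact (this.of_eq (fun x => (Dl_eq x.1 x.2).symm)).to₂

lemma lpf_eq (σ b τ : Str) :
    lpf σ b τ = bif prefB τ σ && decide (b.length < τ.length) then τ else b := by
  unfold lpf
  by_cases h : τ <+: σ ∧ b.length < τ.length
  · rw [if_pos h]
    have : (prefB τ σ && decide (b.length < τ.length)) = true := by
      rw [Bool.and_eq_true, prefB_iff, decide_eq_true_eq]; exact h
    rw [this, cond_true]
  · rw [if_neg h]
    have : (prefB τ σ && decide (b.length < τ.length)) = false := by
      rw [← Bool.not_eq_true, Bool.and_eq_true, prefB_iff, decide_eq_true_eq]; exact h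
    rw [this, cond_false]

lemma pr_longP : Primrec₂ longP := by
  have hh : Primrec₂ (fun (x : Tr × Str) (q : Str × Str) =>
      bif prefB q.2 x.2 && decide (q.1.length < q.2.length) then q.2 else q.1) := by
    refine Primrec.cond ?_ (Primrec.snd.comp Primrec.snd) (Primrec.fst.comp Primrec.snd)
    refine pr_band (pr_prefB.comp (Primrec.snd.comp Primrec.snd)
      (Primrec.snd.comp Primrec.fst)) ?_
    exact (Primrec.nat_lt.comp (list_length.comp (Primrec.fst.comp Primrec.snd))
      (list_length.comp (Primrec.snd.comp Primrec.snd))).decide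
  have hfold := Primrec.list_foldl (Primrec.fst : Primrec fun x : Tr × Str => x.1)
    (Primrec.const ([] : Str)) hh
  have h2 : Primrec fun x : Tr × Str => longP x.1 x.2 := by
    refine hfold.of_eq ?_
    intro x
    show List.foldl _ [] x.1 = longP x.1 x.2
    unfold longP
    congr 1
    funext b τ
    exact (lpf_eq x.2 b τ).symm
  exact h2.to₂

lemma pr_leafB : Primrec₂ leafB := by
  have h2 : Primrec fun x : Tr × Str => leafB x.1 x.2 := by
    refine pr_allB (Primrec.fst : Primrec fun x : Tr × Str => x.1) ?_
    refine (pr_bor (pr_bnot (pr_prefB.comp (Primrec.snd.comp Primrec.fst) Primrec.snd)) ?_)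
    exact (Primrec.eq.comp Primrec.snd (Primrec.snd.comp Primrec.fst)).decide
  exact h2.to₂

lemma pr_legB : Primrec₂ legB := by
  have hMem : Primrec fun x : Tr × Tr => allB x.1 (fun σ => memB x.2 σ) :=
    pr_allB Primrec.fst (pr_memB (Primrec.snd.comp Primrec.fst) Primrec.snd)
  have hPar : Primrec fun x : Tr × Tr => allB x.2 (fun σ => decide (σ = ([]:Str)) ||
      anyB x.2 (fun τ => prefB τ σ && decide (τ.length + 1 = σ.length))) := by
    refine pr_allB Primrec.snd ?_
    refine pr_bor (Primrec.eq.comp Primrec.snd (Primrec.const ([]:Str))).decide ?_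
    refine pr_anyB (Primrec.snd.comp Primrec.fst) ?_
    refine pr_band (pr_prefB.comp Primrec.snd (Primrec.snd.comp Primrec.fst)) ?_
    exact (Primrec.eq.comp
      (Primrec.succ.comp (list_length.comp Primrec.snd))
      (list_length.comp (Primrec.snd.comp Primrec.fst))).decide
  have hMain : Primrec fun x : Tr × Tr => allB x.2 (fun σ => memB x.1 σ ||
    (!(decide (σ = ([]:Str))) &&
     (allB x.1 (fun τ => !(prefB τ σ && decide (τ.length + 1 = σ.length)) || leafB x.1 τ) &&
      (allB (List.range σ.length) (fun i =>
        decide (i < (longP x.1 σ).length) ||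
        (bif decide (i - (longP x.1 σ).length < (Dl x.1 (longP x.1 σ)).length)
         then decide (tval σ i = (Dl x.1 (longP x.1 σ)).getD (i - (longP x.1 σ).length) 0)
         else memB (codesL x.2) (tval σ i))) &&
       (!(leafB x.2 σ) ||
         decide ((longP x.1 σ).length + (Dl x.1 (longP x.1 σ)).length ≤ σ.length)))))) := by
    refine pr_allB Primrec.snd ?_
    refine pr_bor (pr_memB (Primrec.fst.comp Primrec.fst) Primrec.snd) ?_
    refine pr_band (pr_bnot (Primrec.eq.comp Primrec.snd (Primrec.const ([]:Str))).decide) ?_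
    refine pr_band ?_ ?_
    · refine pr_allB (Primrec.fst.comp Primrec.fst) ?_
      refine pr_bor ?_ ?_
      · refine pr_bnot (pr_band
          (pr_prefB.comp Primrec.snd (Primrec.snd.comp Primrec.fst)) ?_)
        exact (Primrec.eq.comp (Primrec.succ.comp (list_length.comp Primrec.snd))
          (list_length.comp (Primrec.snd.comp Primrec.fst))).decide
      · exact pr_leafB.comp (Primrec.fst.comp (Primrec.fst.comp Primrec.fst)) Primrec.snd
    refine pr_band ?_ ?_
    · -- entries check
      refine pr_allB (list_range.comp (list_length.comp Primrec.snd)) ?_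
      -- context here : α := (Tr × Tr) × Str , β := ℕ
      have hσ : Primrec fun y : ((Tr × Tr) × Str) × ℕ => y.1.2 := Primrec.snd.comp Primrec.fst
      have hp : Primrec fun y : ((Tr × Tr) × Str) × ℕ => y.1.1.1 :=
        Primrec.fst.comp (Primrec.fst.comp Primrec.fst)
      have hT : Primrec fun y : ((Tr × Tr) × Str) × ℕ => y.1.1.2 :=
        Primrec.snd.comp (Primrec.fst.comp Primrec.fst)
      have hi : Primrec fun y : ((Tr × Tr) × Str) × ℕ => y.2 := Primrec.snd
      have hlp : Primrec fun y : ((Tr × Tr) × Str) × ℕ => longP y.1.1.1 y.1.2 :=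
        pr_longP.comp hp hσ
      have hDl : Primrec fun y : ((Tr × Tr) × Str) × ℕ => Dl y.1.1.1 (longP y.1.1.1 y.1.2) :=
        pr_Dl.comp hp hlp
      refine pr_bor (Primrec.nat_lt.comp hi (list_length.comp hlp)).decide ?_
      refine Primrec.cond (Primrec.nat_lt.comp
          (Primrec.nat_sub.comp hi (list_length.comp hlp)) (list_length.comp hDl)).decide ?_ ?_
      · exact (Primrec.eq.comp (pr_tval.comp hσ hi)
          ((list_getD 0).comp hDl (Primrec.nat_sub.comp hi (list_length.comp hlp)))).decide
      · exact pr_memB (pr_codesL.comp hT) (pr_tval.comp hσ hi)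
    · -- leaf bound
      have hσ : Primrec fun y : (Tr × Tr) × Str => y.2 := Primrec.snd
      have hp : Primrec fun y : (Tr × Tr) × Str => y.1.1 := Primrec.fst.comp Primrec.fst
      have hT : Primrec fun y : (Tr × Tr) × Str => y.1.2 := Primrec.snd.comp Primrec.fst
      have hlp := pr_longP.comp hp hσ
      have hDl := pr_Dl.comp hp hlp
      refine pr_bor (pr_bnot (pr_leafB.comp hT hσ)) ?_
      exact (Primrec.nat_le.comp
        (Primrec.nat_add.comp (list_length.comp hlp) (list_length.comp hDl))
        (list_length.comp hσ)).decide
  exact (pr_band hMem (pr_band hPar hMain)).to₂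

end PR

open Nat.Partrec (Code)

def decT (m : ℕ) : Tr × ℕ × ℕ × ℕ := Denumerable.ofNat (Tr × ℕ × ℕ × ℕ) m

def chk (p : Tr) (c : Code) (n m : ℕ) : Bool :=
  legB p (decT m).1 &&
  (allB (Denumerable.ofNat (List ℕ) (decT m).2.1) (fun w => memB (codesL (decT m).1) w) &&
   (Nat.Partrec.Code.evaln (decT m).2.2.2 c
      (Nat.pair (Nat.pair n (decT m).2.2.1) (decT m).2.1)).isSome)

def extY (m : ℕ) : ℕ := (decT m).2.2.1

open Primrec in
lemma chk_comp (p : Tr) (c : Code) : Computable₂ (chk p c) := by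
  have hdec : Primrec decT := Primrec.ofNat _
  have hL : Primrec fun x : ℕ × ℕ => (decT x.2).1 :=
    Primrec.fst.comp (hdec.comp Primrec.snd)
  have hu : Primrec fun x : ℕ × ℕ => (decT x.2).2.1 :=
    Primrec.fst.comp (Primrec.snd.comp (hdec.comp Primrec.snd))
  have hy : Primrec fun x : ℕ × ℕ => (decT x.2).2.2.1 :=
    Primrec.fst.comp (Primrec.snd.comp (Primrec.snd.comp (hdec.comp Primrec.snd)))
  have hk : Primrec fun x : ℕ × ℕ => (decT x.2).2.2.2 :=
    Primrec.snd.comp (Primrec.snd.comp (Primrec.snd.comp (hdec.comp Primrec.snd)))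
  have h1 : Primrec fun x : ℕ × ℕ => legB p (decT x.2).1 :=
    pr_legB.comp (Primrec.const p) hL
  have h2 : Primrec fun x : ℕ × ℕ =>
      allB (Denumerable.ofNat (List ℕ) (decT x.2).2.1)
        (fun w => memB (codesL (decT x.2).1) w) := by
    refine pr_allB ((Primrec.ofNat (List ℕ)).comp hu) ?_
    exact pr_memB (pr_codesL.comp (hL.comp Primrec.fst)) Primrec.snd
  have h3 : Primrec fun x : ℕ × ℕ =>
      (Nat.Partrec.Code.evaln (decT x.2).2.2.2 c
        (Nat.pair (Nat.pair x.1 (decT x.2).2.2.1) (decT x.2).2.1)).isSome := by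
    have hpair : Primrec fun x : ℕ × ℕ =>
        (((decT x.2).2.2.2, c), Nat.pair (Nat.pair x.1 (decT x.2).2.2.1) (decT x.2).2.1) :=
      Primrec.pair (Primrec.pair hk (Primrec.const c))
        (Primrec₂.natPair.comp (Primrec₂.natPair.comp Primrec.fst hy) hu)
    have h4 := Nat.Partrec.Code.primrec_evaln.comp hpair
    exact Primrec.option_isSome.comp (h4.of_eq (fun x => rfl))
  exact ((pr_band h1 (pr_band h2 h3)).to₂).to_comp

open Primrec in
lemma extY_comp : Computable extY := by
  have hdec : Primrec decT := Primrec.ofNat _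
  exact (Primrec.fst.comp (Primrec.snd.comp (Primrec.snd.comp hdec))).to_comp

theorem computable_of_chk {p : Tr} {c : Code} {f : ℕ → ℕ}
    (hex : ∀ n, ∃ m, chk p c n m = true)
    (hsound : ∀ n m, chk p c n m = true → extY m = f n) : Computable f := by
  have hp : Partrec₂ (fun (n m : ℕ) => (Part.some (chk p c n m) : Part Bool)) := by
    have := (chk_comp p c).partrec₂
    exact this
  have hrf : Partrec fun n =>
      (Nat.rfind (fun m => (Part.some (chk p c n m) : Part Bool))).map extY :=
    (Partrec.rfind hp).map (extY_comp.comp Computable.snd).to₂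
  refine Partrec.of_eq_tot hrf ?_
  intro n
  obtain ⟨m, hm⟩ := hex n
  have hdom : (Nat.rfind (fun m => (Part.some (chk p c n m) : Part Bool))).Dom := by
    refine Nat.rfind_dom.mpr ?_
    exact ⟨m, Part.mem_some_iff.mpr hm.symm, fun {k} _ => trivial⟩
  have hm0 : (Nat.rfind (fun m => (Part.some (chk p c n m) : Part Bool))).get hdom ∈
      Nat.rfind (fun m => (Part.some (chk p c n m) : Part Bool)) := Part.get_mem hdom
  have hchk : chk p c n ((Nat.rfind (fun m => (Part.some (chk p c n m) : Part Bool))).get hdom)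
      = true := by
    have := Nat.rfind_spec hm0
    rwa [Part.mem_some_iff, eq_comm] at this
  rw [Part.mem_map_iff]
  exact ⟨_, hm0, hsound n _ hchk⟩



def qB (z : ℕ) : Bool :=
  decide ((Denumerable.ofNat (List ℕ) z.unpair.2).length = 1) &&
  decide (((Denumerable.ofNat (List ℕ) z.unpair.2).getD 0 0).unpair.2.unpair.2 = z.unpair.1)

lemma qB_primrec : Primrec qB := by
  have hl : Primrec fun z : ℕ => Denumerable.ofNat (List ℕ) z.unpair.2 :=
    (Primrec.ofNat (List ℕ)).comp (Primrec.snd.comp Primrec.unpair)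
  have h1 : Primrec fun z : ℕ =>
      decide ((Denumerable.ofNat (List ℕ) z.unpair.2).length = 1) :=
    (Primrec.eq.comp (Primrec.list_length.comp hl) (Primrec.const 1)).decide
  have h2 : Primrec fun z : ℕ =>
      decide (((Denumerable.ofNat (List ℕ) z.unpair.2).getD 0 0).unpair.2.unpair.2
        = z.unpair.1) := by
    refine (Primrec.eq.comp (Primrec.snd.comp (Primrec.unpair.comp (Primrec.snd.comp (Primrec.unpair.comp
      ((Primrec.list_getD 0).comp hl (Primrec.const 0)))))) (Primrec.fst.comp Primrec.unpair)).decide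
  refine (Primrec.cond h1 h2 (Primrec.const false)).of_eq (fun z => ?_)
  unfold qB
  cases h : (decide ((Denumerable.ofNat (List ℕ) z.unpair.2).length = 1)) <;>
    simp only [h, cond_false, cond_true, Bool.false_and, Bool.true_and]

noncomputable def c₀ : Code :=
  (Nat.Partrec.Code.exists_code.mp (Partrec.nat_iff.mp
    (Computable.ofOption ((Primrec.cond qB_primrec (Primrec.const (some 0))
      (Primrec.const none)).to_comp)))).choose

lemma c₀_spec : ∀ z, (c₀.eval z).Dom ↔ qB z = true := by
  have h := (Nat.Partrec.Code.exists_code.mp (Partrec.nat_iff.mp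
    (Computable.ofOption ((Primrec.cond qB_primrec (Primrec.const (some 0))
      (Primrec.const none)).to_comp)))).choose_spec
  intro z
  show ((c₀.eval) z).Dom ↔ _
  rw [show c₀.eval = _ from h]
  cases hq : qB z <;> simp [hq]

noncomputable def e₀ : ℕ := Encodable.encode c₀

lemma qB_pair (x u : ℕ) : qB (Nat.pair x u) = true ↔
    ((Denumerable.ofNat (List ℕ) u).length = 1 ∧
     ((Denumerable.ofNat (List ℕ) u).getD 0 0).unpair.2.unpair.2 = x) := by
  unfold qB
  rw [Bool.and_eq_true, decide_eq_true_eq, decide_eq_true_eq, Nat.unpair_pair]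

lemma enumOp_e₀ (B : Set ℕ) :
    enumOpApply e₀ B = {x | ∃ w ∈ B, w.unpair.2.unpair.2 = x} := by
  ext x
  simp only [enumOpApply, Set.mem_setOf_eq, e₀, Denumerable.ofNat_encode]
  constructor
  · rintro ⟨u, hdom, hsub⟩
    rw [c₀_spec, qB_pair] at hdom
    obtain ⟨h1, h2⟩ := hdom
    obtain ⟨w, hw⟩ := List.length_eq_one_iff.mp h1
    rw [hw] at h2
    refine ⟨w, hsub w (by rw [hw]; simp), by simpa using h2⟩
  · rintro ⟨w, hwB, hwx⟩
    refine ⟨Encodable.encode [w], ?_, ?_⟩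
    · rw [c₀_spec, qB_pair, Denumerable.ofNat_encode]
      exact ⟨rfl, by simpa using hwx⟩
    · intro y hy
      rw [Denumerable.ofNat_encode] at hy
      simp at hy
      rwa [hy]

lemma enumOp_e₀_graph (g : ℕ → ℕ) :
    enumOpApply e₀ (graphSet g) = Set.range fun n => (g n).unpair.2 := by
  rw [enumOp_e₀]
  ext x
  simp only [Set.mem_setOf_eq, graphSet, Set.mem_range]
  constructor
  · rintro ⟨w, ⟨n, rfl⟩, hx⟩
    exact ⟨n, by rwa [Nat.unpair_pair] at hx⟩
  · rintro ⟨n, hx⟩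
    exact ⟨Nat.pair n (g n), ⟨n, rfl⟩, by rwa [Nat.unpair_pair]⟩



-- ===== endgame =====
section Endgame
attribute [local instance] Classical.propDecidable
open Nat.Partrec (Code)

lemma mem_codeA {x : ℕ} : x ∈ codeTree Atree ↔ ∃ s, x ∈ codesL (Ts s) := by
  constructor
  · rintro ⟨σ, ⟨s, hs⟩, rfl⟩
    exact ⟨s, List.mem_map.mpr ⟨σ, hs, rfl⟩⟩
  · rintro ⟨s, hx⟩
    obtain ⟨σ, hσ, rfl⟩ := List.mem_map.mp hx
    exact ⟨σ, ⟨s, hσ⟩, rfl⟩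

lemma bodd_double (k : ℕ) : Nat.bodd (k + k) = false := by
  rw [Nat.bodd_add]; cases Nat.bodd k <;> rfl

lemma bodd_double_succ (k : ℕ) : Nat.bodd (k + k + 1) = true := by
  rw [Nat.bodd_succ, bodd_double]; rfl

lemma div2_double (k : ℕ) : Nat.div2 (k + k) = k := by rw [Nat.div2_val]; omega

lemma div2_double_succ (k : ℕ) : Nat.div2 (k + k + 1) = k := by rw [Nat.div2_val]; omega

lemma pairj_inj : Function.Injective (fun j : ℕ => Nat.pair j 0) := by
  intro a b h
  have := congrArg (fun z => (Nat.unpair z).1) h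
  simpa using this

lemma diagCand_mem (p : Tr) (j : ℕ) :
    diagCand p j ∈ chainN (diagLeaf p) (entD p (diagLeaf p) ++ [Nat.pair j 0]) := by
  refine mem_chainN.mpr ⟨(entD p (diagLeaf p)).length, by simp, ?_⟩
  rw [List.take_of_length_le (by simp)]
  unfold diagCand diagTip
  rw [List.append_assoc]

theorem not_REset_codeA : ¬ REset (codeTree Atree) := by
  rintro ⟨c, hc⟩
  set k := Encodable.encode c with hk
  set s := k + k with hs
  have hadopt : adopt s (Ts s) = adoptD c (Ts s) := by
    unfold adopt
    have hb : Nat.bodd s = false := bodd_double k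
    have hd : Nat.div2 s = k := div2_double k
    simp [hb, hd, hk, Denumerable.ofNat_encode]
  have hstep : Ts (s+1) = extL (Ts s) (Ts s ++ adoptD c (Ts s)) := by
    show stepT s (Ts s) = _
    unfold stepT
    rw [hadopt]
  by_cases h : ∃ j, ¬(c.eval (Encodable.encode (diagCand (Ts s) j))).Dom
  · have hAd : adoptD c (Ts s) =
        chainN (diagLeaf (Ts s)) (entD (Ts s) (diagLeaf (Ts s)) ++ [Nat.pair h.choose 0]) := by
      unfold adoptD
      rw [dif_pos h]
    have hν : diagCand (Ts s) h.choose ∈ Ts (s+1) := by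
      rw [hstep]
      refine List.mem_append_left _ (List.mem_append_right _ ?_)
      rw [hAd]
      exact diagCand_mem (Ts s) h.choose
    have hmem : Encodable.encode (diagCand (Ts s) h.choose) ∈ codeTree Atree :=
      ⟨_, ⟨s+1, hν⟩, rfl⟩
    rw [hc] at hmem
    exact h.choose_spec hmem
  · push_neg at h
    have hsub : ∀ j, diagCand (Ts s) j ∈ Atree := by
      intro j
      have hm : Encodable.encode (diagCand (Ts s) j) ∈ codeTree Atree := by
        rw [hc]; exact h j
      obtain ⟨σ, hσ, hσe⟩ := hm
      rwa [← Encodable.encode_injective hσe]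
    have hinf : {x : ℕ | diagTip (Ts s) ++ [x] ∈ Atree}.Infinite := by
      refine Set.infinite_of_injective_forall_mem pairj_inj ?_
      intro j
      exact hsub j
    exact hinf (Atree_finBranch (diagTip (Ts s)))

lemma sub_stage (l : List ℕ) (s0 : ℕ) (h : ∀ w ∈ l, w ∈ codeTree Atree) :
    ∃ t, s0 ≤ t ∧ ∀ w ∈ l, w ∈ codesL (Ts t) := by
  induction l with
  | nil => exact ⟨s0, le_rfl, by simp⟩
  | cons a l ih =>
    obtain ⟨t, ht, hl⟩ := ih (fun w hw => h w (List.mem_cons_of_mem _ hw))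
    obtain ⟨ta, hta⟩ := mem_codeA.mp (h a List.mem_cons_self)
    refine ⟨max t ta, le_trans ht (le_max_left _ _), ?_⟩
    intro w hw
    rcases List.mem_cons.mp hw with rfl | hw
    · exact codesL_mono (Ts_mono (le_max_right _ _)) _ hta
    · exact codesL_mono (Ts_mono (le_max_left _ _)) _ (hl w hw)

lemma dom_evaln {c : Code} {z : ℕ} (h : (c.eval z).Dom) :
    ∃ k, (Nat.Partrec.Code.evaln k c z).isSome := by
  obtain ⟨v, hv⟩ := Part.dom_iff_mem.mp h
  obtain ⟨k, hk⟩ := Nat.Partrec.Code.evaln_complete.mp hv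
  exact ⟨k, Option.isSome_iff_exists.mpr ⟨v, hk⟩⟩

lemma evaln_dom {c : Code} {k z : ℕ} (h : (Nat.Partrec.Code.evaln k c z).isSome) :
    (c.eval z).Dom := by
  obtain ⟨v, hv⟩ := Option.isSome_iff_exists.mp h
  exact Part.dom_iff_mem.mpr ⟨v, Nat.Partrec.Code.evaln_sound hv⟩

lemma graph_pair {f : ℕ → ℕ} {n y : ℕ} (h : Nat.pair n y ∈ graphSet f) : y = f n := by
  obtain ⟨m, hm⟩ := h
  have h1 := congrArg (fun z => (Nat.unpair z).1) hm
  have h2 := congrArg (fun z => (Nat.unpair z).2) hm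
  simp only [Nat.unpair_pair] at h1 h2
  rw [h1] at h2
  exact h2.symm

theorem quasi2 : ∀ f : ℕ → ℕ, EnumLE (graphSet f) (codeTree Atree) → Computable f := by
  rintro f ⟨e, he⟩
  set c : Code := Denumerable.ofNat Code e with hc
  set s : ℕ := e + e + 1 with hsdef
  have hadopt : adopt s (Ts s) = adoptO c (Ts s) := by
    unfold adopt
    have hb : Nat.bodd s = true := bodd_double_succ e
    have hd : Nat.div2 s = e := div2_double_succ e
    rw [hb, hd, ← hc, if_pos rfl]
  have case2 : ¬ ∃ L, BadPair c (Ts s) L := by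
    intro hex
    have hL := hex.choose_spec
    have hLsub : ∀ σ ∈ hex.choose, σ ∈ Atree := by
      intro σ hσ
      refine ⟨s+1, ?_⟩
      show σ ∈ stepT s (Ts s)
      unfold stepT
      rw [hadopt]
      have hch : adoptO c (Ts s) = hex.choose := by
        unfold adoptO
        rw [dif_pos hex]
      refine List.mem_append_left _ ?_
      rw [hch]
      exact List.mem_append_right _ hσ
    obtain ⟨hLeg, n, y, y', u, u', k, k', hyy, hev, hev', hsu, hsu'⟩ := hL
    have hpair : ∀ (yy uu kk : ℕ),
        (Nat.Partrec.Code.evaln kk c (Nat.pair (Nat.pair n yy) uu)).isSome →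
        (∀ w ∈ Denumerable.ofNat (List ℕ) uu, w ∈ codesL hex.choose) → yy = f n := by
      intro yy uu kk h1 h2
      have hmm : Nat.pair n yy ∈ enumOpApply e (codeTree Atree) := by
        refine ⟨uu, ?_, ?_⟩
        · rw [← hc]; exact evaln_dom h1
        · intro w hw
          obtain ⟨τ, hτ, rfl⟩ := List.mem_map.mp (h2 w hw)
          exact ⟨τ, hLsub τ hτ, rfl⟩
      rw [he] at hmm
      exact graph_pair hmm
    rw [hpair y u k hev hsu] at hyy
    rw [hpair y' u' k' hev' hsu'] at hyy
    exact hyy rfl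
  have truth : ∀ n, ∃ (t u kk : ℕ), s ≤ t ∧
      (∀ w ∈ Denumerable.ofNat (List ℕ) u, w ∈ codesL (Ts t)) ∧
      (Nat.Partrec.Code.evaln kk c (Nat.pair (Nat.pair n (f n)) u)).isSome := by
    intro n
    have hmm : Nat.pair n (f n) ∈ enumOpApply e (codeTree Atree) := by
      rw [he]; exact ⟨n, rfl⟩
    obtain ⟨u, hdom, hsub⟩ := hmm
    obtain ⟨t, hts, hsubt⟩ := sub_stage (Denumerable.ofNat (List ℕ) u) s hsub
    obtain ⟨kk, hkk⟩ := dom_evaln (c := c) (by rw [hc]; exact hdom)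
    exact ⟨t, u, kk, hts, hsubt, hkk⟩
  have hex : ∀ n, ∃ m, chk (Ts s) c n m = true := by
    intro n
    obtain ⟨t, u, kk, hts, hsubt, hkk⟩ := truth n
    refine ⟨Encodable.encode ((Ts t, u, f n, kk) : Tr × ℕ × ℕ × ℕ), ?_⟩
    unfold chk
    rw [show decT (Encodable.encode ((Ts t, u, f n, kk) : Tr × ℕ × ℕ × ℕ))
        = (Ts t, u, f n, kk) from Denumerable.ofNat_encode _]
    rw [Bool.and_eq_true, Bool.and_eq_true]
    refine ⟨?_, ?_, ?_⟩
    · exact (legB_iff (Ts_good s).1).mpr (Ts_leg hts)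
    · rw [allB_iff]
      intro w hw
      exact memB_iff.mpr (hsubt w hw)
    · exact hkk
  have hsound : ∀ n m, chk (Ts s) c n m = true → extY m = f n := by
    intro n m hm
    unfold chk at hm
    rw [Bool.and_eq_true, Bool.and_eq_true] at hm
    obtain ⟨hleg, hall, hev⟩ := hm
    have hLeg1 : Leg (Ts s) (decT m).1 := (legB_iff (Ts_good s).1).mp hleg
    obtain ⟨t, u, kk, hts, hsubt, hkk⟩ := truth n
    by_contra hne
    refine case2 ⟨(decT m).1 ++ Ts t,
      leg_union hLeg1 (Ts_leg hts),
      n, (decT m).2.2.1, f n, (decT m).2.1, u, (decT m).2.2.2, kk, hne, hev, hkk, ?_, ?_⟩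
    · intro w hw
      have hh := allB_iff.mp hall w hw
      exact codesL_mono (fun τ hτ => List.mem_append_left _ hτ) _ (memB_iff.mp hh)
    · intro w hw
      exact codesL_mono (fun τ hτ => List.mem_append_right _ hτ) _ (hsubt w hw)
  exact computable_of_chk hex hsound

lemma range_cond (f : ℕ → ℕ) (hf : ∀ n, vseg f n ∈ Atree) :
    (Set.range fun n => (f n).unpair.2) = codeTree Atree := by
  ext x
  constructor
  · rintro ⟨n, rfl⟩
    obtain ⟨t, ht⟩ := hf (n+1)
    have hh := entries_in t _ ht n (by rw [vseg_len]; omega)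
    rw [vseg_tval f (Nat.lt_succ_self n)] at hh
    obtain ⟨τ, hτ, hτe⟩ := List.mem_map.mp hh
    exact ⟨τ, ⟨t, hτ⟩, hτe⟩
  · rintro ⟨ρ, ⟨t, hρ⟩, rfl⟩
    obtain ⟨n, hn⟩ := covering f hf t hρ
    exact ⟨n, hn⟩

end Endgame
end S16

/-- There is a finitely branching tree `A ⊆ ω^{<ω}` with no leaves that is
quasiminimal (coded as a subset of `ω`) and satisfies `ran(π₁ ∘ f) = A` for
every `f ∈ [A]`; in particular `A` is uniformly e-pointed w.r.t. functions. -/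

theorem stmt16 :
    ∃ A : Set (List ℕ), IsTree A ∧ FinBranching A ∧ NoLeaves A ∧
      Quasiminimal (codeTree A) ∧
      (∀ f ∈ Paths A, (Set.range fun n => (f n).unpair.2) = codeTree A) ∧
      UEPfun A := by
  have hTree : IsTree S16.Atree := fun σ τ hpre hτ => S16.Atree_PC hτ hpre
  have hFin : FinBranching S16.Atree := fun σ _ => S16.Atree_finBranch σ
  have hNoL : NoLeaves S16.Atree := by
    intro σ hσ hLf
    obtain ⟨τ, hτ, hpre, hne⟩ := S16.Atree_notLf hσ
    exact hne (hLf.2 τ hτ hpre)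
  have hRange : ∀ f ∈ Paths S16.Atree,
      (Set.range fun n => (f n).unpair.2) = codeTree S16.Atree := by
    intro f hf
    exact S16.range_cond f hf
  refine ⟨S16.Atree, hTree, hFin, hNoL, ⟨S16.not_REset_codeA, S16.quasi2⟩, hRange, ?_⟩
  refine ⟨hTree, hFin, hNoL, S16.e₀, ?_⟩
  intro g hg
  rw [S16.enumOp_e₀_graph]
  exact hRange g hg
end
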